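/- For every positive integer n, every complex root of D_n(t) = t^9 - (n+3)t^8 - (n-4)t^7 + (2n-8)t^6 + (2n+8)t^5 + (2n-8)t^4 - (2n-11)t^3 + (3n-5)t^2 + (3n+4)t - 4(n+1) other than its unique real root greater than 2 has absolute value strictly less than 2. -/

import Mathlib

open Polynomial

set_option maxHeartbeats 4000000
set_option maxRecDepth 8000

/-- The denominator polynomial `D_n(t)`, over `ℂ`. -/
noncomputable def DpolyC (n : ℕ) : Polynomial ℂ :=
  X ^ 9 - C ((n : ℂ) + 3) * X ^ 8 - C ((n : ℂ) - 4) * X ^ 7 + C (2 * (n : ℂ) - 8) * X ^ 6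
    + C (2 * (n : ℂ) + 8) * X ^ 5 + C (2 * (n : ℂ) - 8) * X ^ 4 - C (2 * (n : ℂ) - 11) * X ^ 3
    + C (3 * (n : ℂ) - 5) * X ^ 2 + C (3 * (n : ℂ) + 4) * X - C (4 * ((n : ℂ) + 1))

namespace Stmt7Aux

/-- `P(z)`: the `n`-free part of `D_n`. -/
def Pa {R : Type*} [CommRing R] (z : R) : R :=
  z^9 - 3*z^8 + 4*z^7 - 8*z^6 + 8*z^5 - 8*z^4 + 11*z^3 - 5*z^2 + 4*z - 4

/-- `Q(z)`: the coefficient of `n` in `D_n`. -/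
def Qa {R : Type*} [CommRing R] (z : R) : R :=
  -z^8 - z^7 + 2*z^6 + 2*z^5 + 2*z^4 - 2*z^3 + 3*z^2 + 3*z - 4

/-- Bezoutian of `P` and `Q` in symmetric coordinates `b = z+w`, `c = z*w`. -/
def Ka {R : Type*} [CommRing R] (b c : R) : R :=
  (-4)*b^0*c^0 + (25)*b^0*c^1 + (31)*b^0*c^2 + (-52)*b^0*c^3 + (46)*b^0*c^4 + (-18)*b^0*c^5 + (5)*b^0*c^7 + (-1)*b^0*c^8 + (32)*b^1*c^0 + (-39)*b^1*c^1 + (74)*b^1*c^2 + (6)*b^1*c^3 + (-60)*b^1*c^4 + (38)*b^1*c^5 + (-18)*b^1*c^6 + (-1)*b^1*c^7 + (-52)*b^2*c^0 + (40)*b^2*c^1 + (10)*b^2*c^2 + (-17)*b^2*c^3 + (-33)*b^2*c^4 + (-4)*b^2*c^5 + (2)*b^2*c^6 + (40)*b^3*c^0 + (-144)*b^3*c^1 + (2)*b^3*c^2 + (89)*b^3*c^3 + (-6)*b^3*c^4 + (2)*b^3*c^5 + (-24)*b^4*c^0 + (68)*b^4*c^1 + (-28)*b^4*c^2 + (2)*b^4*c^3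 + (2)*b^4*c^4 + (40)*b^5*c^0 + (-32)*b^5*c^1 + (-32)*b^5*c^2 + (-2)*b^5*c^3 + (-20)*b^6*c^0 + (23)*b^6*c^1 + (3)*b^6*c^2 + (8)*b^7*c^0 + (3)*b^7*c^1 + (-4)*b^8*c^0

/-- `(P+Q)(z)*Q(w) + (P+Q)(w)*Q(z)` in symmetric coordinates. -/
def Sa {R : Type*} [CommRing R] (b c : R) : R :=
  (64)*b^0*c^0 + (74)*b^0*c^1 + (-22)*b^0*c^2 + (80)*b^0*c^3 + (-20)*b^0*c^4 + (84)*b^0*c^5 + (-16)*b^0*c^6 + (2)*b^0*c^7 + (10)*b^0*c^8 + (-52)*b^1*c^0 + (75)*b^1*c^1 + (-237)*b^1*c^2 + (-40)*b^1*c^3 + (70)*b^1*c^4 + (-54)*b^1*c^5 + (76)*b^1*c^6 + (-5)*b^1*c^7 + (-1)*b^1*c^8 + (-16)*b^2*c^0 + (-19)*b^2*c^1 + (-126)*b^2*c^2 + (-280)*b^2*c^3 + (-102)*b^2*c^4 + (-14)*b^2*c^5 + (-10)*b^2*c^6 + (-1)*b^2*c^7 + (-20)*b^3*c^0 + (276)*b^3*c^1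 + (-10)*b^3*c^2 + (-171)*b^3*c^3 + (59)*b^3*c^4 + (-28)*b^3*c^5 + (2)*b^3*c^6 + (8)*b^4*c^0 + (-4)*b^4*c^1 + (446)*b^4*c^2 + (105)*b^4*c^3 + (10)*b^4*c^4 + (2)*b^4*c^5 + (-56)*b^5*c^0 + (24)*b^5*c^1 + (36)*b^5*c^2 + (-22)*b^5*c^3 + (2)*b^5*c^4 + (8)*b^6*c^0 + (-190)*b^6*c^1 + (-34)*b^6*c^2 + (-2)*b^6*c^3 + (-4)*b^7*c^0 + (17)*b^7*c^1 + (3)*b^7*c^2 + (24)*b^8*c^0 + (3)*b^8*c^1 + (-4)*b^9*c^0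

lemma Ka_cast (b c : ℝ) : ((Ka b c : ℝ) : ℂ) = Ka (b:ℂ) (c:ℂ) := by
  simp only [Ka]; push_cast; ring

lemma Sa_cast (b c : ℝ) : ((Sa b c : ℝ) : ℂ) = Sa (b:ℂ) (c:ℂ) := by
  simp only [Sa]; push_cast; ring

lemma Pa_cast (x : ℝ) : ((Pa x : ℝ) : ℂ) = Pa (x:ℂ) := by
  simp only [Pa]; push_cast; ring

lemma Qa_cast (x : ℝ) : ((Qa x : ℝ) : ℂ) = Qa (x:ℂ) := by
  simp only [Qa]; push_cast; ring

lemma eval_D (n : ℕ) (z : ℂ) : (DpolyC n).eval z = Pa z + (n:ℂ) * Qa z := by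
  simp only [DpolyC, Pa, Qa, eval_add, eval_sub, eval_mul, eval_pow, eval_C, eval_X]
  ring

lemma I1 (z w : ℂ) : Pa z * Qa w - Pa w * Qa z = (z - w) * Ka (z+w) (z*w) := by
  simp only [Pa, Qa, Ka]; ring

lemma I3 (z w : ℂ) : (Pa z + Qa z) * Qa w + (Pa w + Qa w) * Qa z = Sa (z+w) (z*w) := by
  simp only [Pa, Qa, Sa]; ring

lemma Pa_conj (z : ℂ) : Pa ((starRingEnd ℂ) z) = (starRingEnd ℂ) (Pa z) := by
  simp only [Pa, map_sub, map_add, map_mul, map_pow, map_ofNat]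

lemma Qa_conj (z : ℂ) : Qa ((starRingEnd ℂ) z) = (starRingEnd ℂ) (Qa z) := by
  simp only [Qa, map_sub, map_add, map_mul, map_pow, map_neg, map_ofNat]

lemma L2aux (a u : ℝ) (hu : 0 < u^(2:ℕ)) :
    (0:ℝ) < (4128768)*(a^(2:ℕ))^(0:ℕ)*(u^(2:ℕ))^(1:ℕ) + ((1908736)*(a^(2:ℕ))^(0:ℕ)*(u^(2:ℕ))^(2:ℕ) + (252928)*(a^(2:ℕ))^(0:ℕ)*(u^(2:ℕ))^(3:ℕ) + (81152)*(a^(2:ℕ))^(0:ℕ)*(u^(2:ℕ))^(4:ℕ) + (6592)*(a^(2:ℕ))^(0:ℕ)*(u^(2:ℕ))^(5:ℕ) + (560)*(a^(2:ℕ))^(0:ℕ)*(u^(2:ℕ))^(6:ℕ) + (20)*(a^(2:ℕ))^(0:ℕ)*(u^(2:ℕ))^(7:ℕ) + (1)*(a^(2:ℕ))^(0:ℕ)*(u^(2:ℕ))^(8:ℕ) + (6291456)*(a^(2:ℕ))^(1:ℕ)*(u^(2:ℕ))^(0:ℕ) + (9076736)*(a^(2:ℕ))^(1:ℕ)*(u^(2:ℕ))^(1:ℕ)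 + (6815744)*(a^(2:ℕ))^(1:ℕ)*(u^(2:ℕ))^(2:ℕ) + (955392)*(a^(2:ℕ))^(1:ℕ)*(u^(2:ℕ))^(3:ℕ) + (171520)*(a^(2:ℕ))^(1:ℕ)*(u^(2:ℕ))^(4:ℕ) + (15680)*(a^(2:ℕ))^(1:ℕ)*(u^(2:ℕ))^(5:ℕ) + (832)*(a^(2:ℕ))^(1:ℕ)*(u^(2:ℕ))^(6:ℕ) + (36)*(a^(2:ℕ))^(1:ℕ)*(u^(2:ℕ))^(7:ℕ) + (15925248)*(a^(2:ℕ))^(2:ℕ)*(u^(2:ℕ))^(0:ℕ) + (13647872)*(a^(2:ℕ))^(2:ℕ)*(u^(2:ℕ))^(1:ℕ) + (9720832)*(a^(2:ℕ))^(2:ℕ)*(u^(2:ℕ))^(2:ℕ) + (1562624)*(a^(2:ℕ))^(2:ℕ)*(u^(2:ℕ))^(3:ℕ) + (199616)*(a^(2:ℕ))^(2:ℕ)*(u^(2:ℕ))^(4:ℕ) + (15328)*(a^(2:ℕ))^(2:ℕ)*(u^(2:ℕ))^(5:ℕ) + (668)*(a^(2:ℕ))^(2:ℕ)*(u^(2:ℕ))^(6:ℕ)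 + (8)*(a^(2:ℕ))^(2:ℕ)*(u^(2:ℕ))^(7:ℕ) + (17465344)*(a^(2:ℕ))^(3:ℕ)*(u^(2:ℕ))^(0:ℕ) + (18284544)*(a^(2:ℕ))^(3:ℕ)*(u^(2:ℕ))^(1:ℕ) + (9026560)*(a^(2:ℕ))^(3:ℕ)*(u^(2:ℕ))^(2:ℕ) + (1473536)*(a^(2:ℕ))^(3:ℕ)*(u^(2:ℕ))^(3:ℕ) + (157760)*(a^(2:ℕ))^(3:ℕ)*(u^(2:ℕ))^(4:ℕ) + (9024)*(a^(2:ℕ))^(3:ℕ)*(u^(2:ℕ))^(5:ℕ) + (252)*(a^(2:ℕ))^(3:ℕ)*(u^(2:ℕ))^(6:ℕ) + (11214848)*(a^(2:ℕ))^(4:ℕ)*(u^(2:ℕ))^(0:ℕ) + (18027520)*(a^(2:ℕ))^(4:ℕ)*(u^(2:ℕ))^(1:ℕ) + (6396416)*(a^(2:ℕ))^(4:ℕ)*(u^(2:ℕ))^(2:ℕ) + (983424)*(a^(2:ℕ))^(4:ℕ)*(u^(2:ℕ))^(3:ℕ) + (84368)*(a^(2:ℕ))^(4:ℕ)*(u^(2:ℕ))^(4:ℕ)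 + (3588)*(a^(2:ℕ))^(4:ℕ)*(u^(2:ℕ))^(5:ℕ) + (28)*(a^(2:ℕ))^(4:ℕ)*(u^(2:ℕ))^(6:ℕ) + (6225920)*(a^(2:ℕ))^(5:ℕ)*(u^(2:ℕ))^(0:ℕ) + (12827648)*(a^(2:ℕ))^(5:ℕ)*(u^(2:ℕ))^(1:ℕ) + (3686400)*(a^(2:ℕ))^(5:ℕ)*(u^(2:ℕ))^(2:ℕ) + (499840)*(a^(2:ℕ))^(5:ℕ)*(u^(2:ℕ))^(3:ℕ) + (32640)*(a^(2:ℕ))^(5:ℕ)*(u^(2:ℕ))^(4:ℕ) + (756)*(a^(2:ℕ))^(5:ℕ)*(u^(2:ℕ))^(5:ℕ) + (4365312)*(a^(2:ℕ))^(6:ℕ)*(u^(2:ℕ))^(0:ℕ) + (7118848)*(a^(2:ℕ))^(6:ℕ)*(u^(2:ℕ))^(1:ℕ) + (1777536)*(a^(2:ℕ))^(6:ℕ)*(u^(2:ℕ))^(2:ℕ) + (195392)*(a^(2:ℕ))^(6:ℕ)*(u^(2:ℕ))^(3:ℕ) + (8620)*(a^(2:ℕ))^(6:ℕ)*(u^(2:ℕ))^(4:ℕ)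 + (56)*(a^(2:ℕ))^(6:ℕ)*(u^(2:ℕ))^(5:ℕ) + (3183616)*(a^(2:ℕ))^(7:ℕ)*(u^(2:ℕ))^(0:ℕ) + (3343360)*(a^(2:ℕ))^(7:ℕ)*(u^(2:ℕ))^(1:ℕ) + (709760)*(a^(2:ℕ))^(7:ℕ)*(u^(2:ℕ))^(2:ℕ) + (56960)*(a^(2:ℕ))^(7:ℕ)*(u^(2:ℕ))^(3:ℕ) + (1260)*(a^(2:ℕ))^(7:ℕ)*(u^(2:ℕ))^(4:ℕ) + (1941760)*(a^(2:ℕ))^(8:ℕ)*(u^(2:ℕ))^(0:ℕ) + (1370304)*(a^(2:ℕ))^(8:ℕ)*(u^(2:ℕ))^(1:ℕ) + (224848)*(a^(2:ℕ))^(8:ℕ)*(u^(2:ℕ))^(2:ℕ) + (11260)*(a^(2:ℕ))^(8:ℕ)*(u^(2:ℕ))^(3:ℕ) + (70)*(a^(2:ℕ))^(8:ℕ)*(u^(2:ℕ))^(4:ℕ) + (958976)*(a^(2:ℕ))^(9:ℕ)*(u^(2:ℕ))^(0:ℕ) + (472640)*(a^(2:ℕ))^(9:ℕ)*(u^(2:ℕ))^(1:ℕ)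 + (52800)*(a^(2:ℕ))^(9:ℕ)*(u^(2:ℕ))^(2:ℕ) + (1260)*(a^(2:ℕ))^(9:ℕ)*(u^(2:ℕ))^(3:ℕ) + (383168)*(a^(2:ℕ))^(10:ℕ)*(u^(2:ℕ))^(0:ℕ) + (127712)*(a^(2:ℕ))^(10:ℕ)*(u^(2:ℕ))^(1:ℕ) + (8340)*(a^(2:ℕ))^(10:ℕ)*(u^(2:ℕ))^(2:ℕ) + (56)*(a^(2:ℕ))^(10:ℕ)*(u^(2:ℕ))^(3:ℕ) + (120640)*(a^(2:ℕ))^(11:ℕ)*(u^(2:ℕ))^(0:ℕ) + (25152)*(a^(2:ℕ))^(11:ℕ)*(u^(2:ℕ))^(1:ℕ) + (756)*(a^(2:ℕ))^(11:ℕ)*(u^(2:ℕ))^(2:ℕ) + (28656)*(a^(2:ℕ))^(12:ℕ)*(u^(2:ℕ))^(0:ℕ) + (3308)*(a^(2:ℕ))^(12:ℕ)*(u^(2:ℕ))^(1:ℕ) + (28)*(a^(2:ℕ))^(12:ℕ)*(u^(2:ℕ))^(2:ℕ) + (4864)*(a^(2:ℕ))^(13:ℕ)*(u^(2:ℕ))^(0:ℕ)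 + (252)*(a^(2:ℕ))^(13:ℕ)*(u^(2:ℕ))^(1:ℕ) + (548)*(a^(2:ℕ))^(14:ℕ)*(u^(2:ℕ))^(0:ℕ) + (8)*(a^(2:ℕ))^(14:ℕ)*(u^(2:ℕ))^(1:ℕ) + (36)*(a^(2:ℕ))^(15:ℕ)*(u^(2:ℕ))^(0:ℕ) + (1)*(a^(2:ℕ))^(16:ℕ)*(u^(2:ℕ))^(0:ℕ)) := by
  have h1 : (0:ℝ) < (4128768)*(a^(2:ℕ))^(0:ℕ)*(u^(2:ℕ))^(1:ℕ) := by
    rw [pow_zero, pow_one]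
    have : (0:ℝ) < (4128768:ℝ) := by norm_num
    nlinarith
  have h2 : (0:ℝ) ≤ (1908736)*(a^(2:ℕ))^(0:ℕ)*(u^(2:ℕ))^(2:ℕ) + (252928)*(a^(2:ℕ))^(0:ℕ)*(u^(2:ℕ))^(3:ℕ) + (81152)*(a^(2:ℕ))^(0:ℕ)*(u^(2:ℕ))^(4:ℕ) + (6592)*(a^(2:ℕ))^(0:ℕ)*(u^(2:ℕ))^(5:ℕ) + (560)*(a^(2:ℕ))^(0:ℕ)*(u^(2:ℕ))^(6:ℕ) + (20)*(a^(2:ℕ))^(0:ℕ)*(u^(2:ℕ))^(7:ℕ) + (1)*(a^(2:ℕ))^(0:ℕ)*(u^(2:ℕ))^(8:ℕ) + (6291456)*(a^(2:ℕ))^(1:ℕ)*(u^(2:ℕ))^(0:ℕ) + (9076736)*(a^(2:ℕ))^(1:ℕ)*(u^(2:ℕ))^(1:ℕ) + (6815744)*(a^(2:ℕ))^(1:ℕ)*(u^(2:ℕ))^(2:ℕ) + (955392)*(a^(2:ℕ))^(1:ℕ)*(u^(2:ℕ))^(3:ℕ) + (171520)*(a^(2:ℕ))^(1:ℕ)*(u^(2:ℕ))^(4:ℕ)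 + (15680)*(a^(2:ℕ))^(1:ℕ)*(u^(2:ℕ))^(5:ℕ) + (832)*(a^(2:ℕ))^(1:ℕ)*(u^(2:ℕ))^(6:ℕ) + (36)*(a^(2:ℕ))^(1:ℕ)*(u^(2:ℕ))^(7:ℕ) + (15925248)*(a^(2:ℕ))^(2:ℕ)*(u^(2:ℕ))^(0:ℕ) + (13647872)*(a^(2:ℕ))^(2:ℕ)*(u^(2:ℕ))^(1:ℕ) + (9720832)*(a^(2:ℕ))^(2:ℕ)*(u^(2:ℕ))^(2:ℕ) + (1562624)*(a^(2:ℕ))^(2:ℕ)*(u^(2:ℕ))^(3:ℕ) + (199616)*(a^(2:ℕ))^(2:ℕ)*(u^(2:ℕ))^(4:ℕ) + (15328)*(a^(2:ℕ))^(2:ℕ)*(u^(2:ℕ))^(5:ℕ) + (668)*(a^(2:ℕ))^(2:ℕ)*(u^(2:ℕ))^(6:ℕ) + (8)*(a^(2:ℕ))^(2:ℕ)*(u^(2:ℕ))^(7:ℕ) + (17465344)*(a^(2:ℕ))^(3:ℕ)*(u^(2:ℕ))^(0:ℕ) + (18284544)*(a^(2:ℕ))^(3:ℕ)*(u^(2:ℕ))^(1:ℕ)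 + (9026560)*(a^(2:ℕ))^(3:ℕ)*(u^(2:ℕ))^(2:ℕ) + (1473536)*(a^(2:ℕ))^(3:ℕ)*(u^(2:ℕ))^(3:ℕ) + (157760)*(a^(2:ℕ))^(3:ℕ)*(u^(2:ℕ))^(4:ℕ) + (9024)*(a^(2:ℕ))^(3:ℕ)*(u^(2:ℕ))^(5:ℕ) + (252)*(a^(2:ℕ))^(3:ℕ)*(u^(2:ℕ))^(6:ℕ) + (11214848)*(a^(2:ℕ))^(4:ℕ)*(u^(2:ℕ))^(0:ℕ) + (18027520)*(a^(2:ℕ))^(4:ℕ)*(u^(2:ℕ))^(1:ℕ) + (6396416)*(a^(2:ℕ))^(4:ℕ)*(u^(2:ℕ))^(2:ℕ) + (983424)*(a^(2:ℕ))^(4:ℕ)*(u^(2:ℕ))^(3:ℕ) + (84368)*(a^(2:ℕ))^(4:ℕ)*(u^(2:ℕ))^(4:ℕ) + (3588)*(a^(2:ℕ))^(4:ℕ)*(u^(2:ℕ))^(5:ℕ) + (28)*(a^(2:ℕ))^(4:ℕ)*(u^(2:ℕ))^(6:ℕ) + (6225920)*(a^(2:ℕ))^(5:ℕ)*(u^(2:ℕ))^(0:ℕ)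 + (12827648)*(a^(2:ℕ))^(5:ℕ)*(u^(2:ℕ))^(1:ℕ) + (3686400)*(a^(2:ℕ))^(5:ℕ)*(u^(2:ℕ))^(2:ℕ) + (499840)*(a^(2:ℕ))^(5:ℕ)*(u^(2:ℕ))^(3:ℕ) + (32640)*(a^(2:ℕ))^(5:ℕ)*(u^(2:ℕ))^(4:ℕ) + (756)*(a^(2:ℕ))^(5:ℕ)*(u^(2:ℕ))^(5:ℕ) + (4365312)*(a^(2:ℕ))^(6:ℕ)*(u^(2:ℕ))^(0:ℕ) + (7118848)*(a^(2:ℕ))^(6:ℕ)*(u^(2:ℕ))^(1:ℕ) + (1777536)*(a^(2:ℕ))^(6:ℕ)*(u^(2:ℕ))^(2:ℕ) + (195392)*(a^(2:ℕ))^(6:ℕ)*(u^(2:ℕ))^(3:ℕ) + (8620)*(a^(2:ℕ))^(6:ℕ)*(u^(2:ℕ))^(4:ℕ) + (56)*(a^(2:ℕ))^(6:ℕ)*(u^(2:ℕ))^(5:ℕ) + (3183616)*(a^(2:ℕ))^(7:ℕ)*(u^(2:ℕ))^(0:ℕ) + (3343360)*(a^(2:ℕ))^(7:ℕ)*(u^(2:ℕ))^(1:ℕ)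 + (709760)*(a^(2:ℕ))^(7:ℕ)*(u^(2:ℕ))^(2:ℕ) + (56960)*(a^(2:ℕ))^(7:ℕ)*(u^(2:ℕ))^(3:ℕ) + (1260)*(a^(2:ℕ))^(7:ℕ)*(u^(2:ℕ))^(4:ℕ) + (1941760)*(a^(2:ℕ))^(8:ℕ)*(u^(2:ℕ))^(0:ℕ) + (1370304)*(a^(2:ℕ))^(8:ℕ)*(u^(2:ℕ))^(1:ℕ) + (224848)*(a^(2:ℕ))^(8:ℕ)*(u^(2:ℕ))^(2:ℕ) + (11260)*(a^(2:ℕ))^(8:ℕ)*(u^(2:ℕ))^(3:ℕ) + (70)*(a^(2:ℕ))^(8:ℕ)*(u^(2:ℕ))^(4:ℕ) + (958976)*(a^(2:ℕ))^(9:ℕ)*(u^(2:ℕ))^(0:ℕ) + (472640)*(a^(2:ℕ))^(9:ℕ)*(u^(2:ℕ))^(1:ℕ) + (52800)*(a^(2:ℕ))^(9:ℕ)*(u^(2:ℕ))^(2:ℕ) + (1260)*(a^(2:ℕ))^(9:ℕ)*(u^(2:ℕ))^(3:ℕ) + (383168)*(a^(2:ℕ))^(10:ℕ)*(u^(2:ℕ))^(0:ℕ)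 + (127712)*(a^(2:ℕ))^(10:ℕ)*(u^(2:ℕ))^(1:ℕ) + (8340)*(a^(2:ℕ))^(10:ℕ)*(u^(2:ℕ))^(2:ℕ) + (56)*(a^(2:ℕ))^(10:ℕ)*(u^(2:ℕ))^(3:ℕ) + (120640)*(a^(2:ℕ))^(11:ℕ)*(u^(2:ℕ))^(0:ℕ) + (25152)*(a^(2:ℕ))^(11:ℕ)*(u^(2:ℕ))^(1:ℕ) + (756)*(a^(2:ℕ))^(11:ℕ)*(u^(2:ℕ))^(2:ℕ) + (28656)*(a^(2:ℕ))^(12:ℕ)*(u^(2:ℕ))^(0:ℕ) + (3308)*(a^(2:ℕ))^(12:ℕ)*(u^(2:ℕ))^(1:ℕ) + (28)*(a^(2:ℕ))^(12:ℕ)*(u^(2:ℕ))^(2:ℕ) + (4864)*(a^(2:ℕ))^(13:ℕ)*(u^(2:ℕ))^(0:ℕ) + (252)*(a^(2:ℕ))^(13:ℕ)*(u^(2:ℕ))^(1:ℕ) + (548)*(a^(2:ℕ))^(14:ℕ)*(u^(2:ℕ))^(0:ℕ) + (8)*(a^(2:ℕ))^(14:ℕ)*(u^(2:ℕ))^(1:ℕ)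 + (36)*(a^(2:ℕ))^(15:ℕ)*(u^(2:ℕ))^(0:ℕ) + (1)*(a^(2:ℕ))^(16:ℕ)*(u^(2:ℕ))^(0:ℕ) := by positivity
  linarith

lemma L1aaux (a u : ℝ) :
    (0:ℝ) < (20713570304)*(a^(2:ℕ))^(0:ℕ)*(u^(2:ℕ))^(0:ℕ) + ((32210026496)*(a^(2:ℕ))^(0:ℕ)*(u^(2:ℕ))^(1:ℕ) + (14545813504)*(a^(2:ℕ))^(0:ℕ)*(u^(2:ℕ))^(2:ℕ) + (1736376320)*(a^(2:ℕ))^(0:ℕ)*(u^(2:ℕ))^(3:ℕ) + (164663296)*(a^(2:ℕ))^(0:ℕ)*(u^(2:ℕ))^(4:ℕ) + (10234880)*(a^(2:ℕ))^(0:ℕ)*(u^(2:ℕ))^(5:ℕ) + (373248)*(a^(2:ℕ))^(0:ℕ)*(u^(2:ℕ))^(6:ℕ) + (7264)*(a^(2:ℕ))^(0:ℕ)*(u^(2:ℕ))^(7:ℕ) + (56)*(a^(2:ℕ))^(0:ℕ)*(u^(2:ℕ))^(8:ℕ) + (225381974016)*(a^(2:ℕ))^(1:ℕ)*(u^(2:ℕ))^(0:ℕ)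 + (171341316096)*(a^(2:ℕ))^(1:ℕ)*(u^(2:ℕ))^(1:ℕ) + (45511819264)*(a^(2:ℕ))^(1:ℕ)*(u^(2:ℕ))^(2:ℕ) + (5207195648)*(a^(2:ℕ))^(1:ℕ)*(u^(2:ℕ))^(3:ℕ) + (391948288)*(a^(2:ℕ))^(1:ℕ)*(u^(2:ℕ))^(4:ℕ) + (17487360)*(a^(2:ℕ))^(1:ℕ)*(u^(2:ℕ))^(5:ℕ) + (413952)*(a^(2:ℕ))^(1:ℕ)*(u^(2:ℕ))^(6:ℕ) + (4048)*(a^(2:ℕ))^(1:ℕ)*(u^(2:ℕ))^(7:ℕ) + (4)*(a^(2:ℕ))^(1:ℕ)*(u^(2:ℕ))^(8:ℕ) + (636992487424)*(a^(2:ℕ))^(2:ℕ)*(u^(2:ℕ))^(0:ℕ) + (347519057920)*(a^(2:ℕ))^(2:ℕ)*(u^(2:ℕ))^(1:ℕ) + (68788387840)*(a^(2:ℕ))^(2:ℕ)*(u^(2:ℕ))^(2:ℕ) + (6773276672)*(a^(2:ℕ))^(2:ℕ)*(u^(2:ℕ))^(3:ℕ) + (391070720)*(a^(2:ℕ))^(2:ℕ)*(u^(2:ℕ))^(4:ℕ)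 + (12183040)*(a^(2:ℕ))^(2:ℕ)*(u^(2:ℕ))^(5:ℕ) + (173216)*(a^(2:ℕ))^(2:ℕ)*(u^(2:ℕ))^(6:ℕ) + (688)*(a^(2:ℕ))^(2:ℕ)*(u^(2:ℕ))^(7:ℕ) + (949280374784)*(a^(2:ℕ))^(3:ℕ)*(u^(2:ℕ))^(0:ℕ) + (404033273856)*(a^(2:ℕ))^(3:ℕ)*(u^(2:ℕ))^(1:ℕ) + (63847792640)*(a^(2:ℕ))^(3:ℕ)*(u^(2:ℕ))^(2:ℕ) + (5100621824)*(a^(2:ℕ))^(3:ℕ)*(u^(2:ℕ))^(3:ℕ) + (218468864)*(a^(2:ℕ))^(3:ℕ)*(u^(2:ℕ))^(4:ℕ) + (4525568)*(a^(2:ℕ))^(3:ℕ)*(u^(2:ℕ))^(5:ℕ) + (34480)*(a^(2:ℕ))^(3:ℕ)*(u^(2:ℕ))^(6:ℕ) + (32)*(a^(2:ℕ))^(3:ℕ)*(u^(2:ℕ))^(7:ℕ) + (914955993088)*(a^(2:ℕ))^(4:ℕ)*(u^(2:ℕ))^(0:ℕ) + (313010290688)*(a^(2:ℕ))^(4:ℕ)*(u^(2:ℕ))^(1:ℕ)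 + (39940759552)*(a^(2:ℕ))^(4:ℕ)*(u^(2:ℕ))^(2:ℕ) + (2488199168)*(a^(2:ℕ))^(4:ℕ)*(u^(2:ℕ))^(3:ℕ) + (76011520)*(a^(2:ℕ))^(4:ℕ)*(u^(2:ℕ))^(4:ℕ) + (974304)*(a^(2:ℕ))^(4:ℕ)*(u^(2:ℕ))^(5:ℕ) + (3248)*(a^(2:ℕ))^(4:ℕ)*(u^(2:ℕ))^(6:ℕ) + (626724126720)*(a^(2:ℕ))^(5:ℕ)*(u^(2:ℕ))^(0:ℕ) + (173802881024)*(a^(2:ℕ))^(5:ℕ)*(u^(2:ℕ))^(1:ℕ) + (17701830656)*(a^(2:ℕ))^(5:ℕ)*(u^(2:ℕ))^(2:ℕ) + (829705216)*(a^(2:ℕ))^(5:ℕ)*(u^(2:ℕ))^(3:ℕ) + (17174272)*(a^(2:ℕ))^(5:ℕ)*(u^(2:ℕ))^(4:ℕ) + (121872)*(a^(2:ℕ))^(5:ℕ)*(u^(2:ℕ))^(5:ℕ) + (112)*(a^(2:ℕ))^(5:ℕ)*(u^(2:ℕ))^(6:ℕ) + (321262813184)*(a^(2:ℕ))^(6:ℕ)*(u^(2:ℕ))^(0:ℕ)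 + (71946698752)*(a^(2:ℕ))^(6:ℕ)*(u^(2:ℕ))^(1:ℕ) + (5718693888)*(a^(2:ℕ))^(6:ℕ)*(u^(2:ℕ))^(2:ℕ) + (193670144)*(a^(2:ℕ))^(6:ℕ)*(u^(2:ℕ))^(3:ℕ) + (2527520)*(a^(2:ℕ))^(6:ℕ)*(u^(2:ℕ))^(4:ℕ) + (8176)*(a^(2:ℕ))^(6:ℕ)*(u^(2:ℕ))^(5:ℕ) + (127033212928)*(a^(2:ℕ))^(7:ℕ)*(u^(2:ℕ))^(0:ℕ) + (22685069312)*(a^(2:ℕ))^(7:ℕ)*(u^(2:ℕ))^(1:ℕ) + (1365251072)*(a^(2:ℕ))^(7:ℕ)*(u^(2:ℕ))^(2:ℕ) + (31720448)*(a^(2:ℕ))^(7:ℕ)*(u^(2:ℕ))^(3:ℕ) + (233840)*(a^(2:ℕ))^(7:ℕ)*(u^(2:ℕ))^(4:ℕ) + (224)*(a^(2:ℕ))^(7:ℕ)*(u^(2:ℕ))^(5:ℕ) + (39435063296)*(a^(2:ℕ))^(8:ℕ)*(u^(2:ℕ))^(0:ℕ) + (5502610432)*(a^(2:ℕ))^(8:ℕ)*(u^(2:ℕ))^(1:ℕ)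 + (241172992)*(a^(2:ℕ))^(8:ℕ)*(u^(2:ℕ))^(2:ℕ) + (3577120)*(a^(2:ℕ))^(8:ℕ)*(u^(2:ℕ))^(3:ℕ) + (12320)*(a^(2:ℕ))^(8:ℕ)*(u^(2:ℕ))^(4:ℕ) + (9695582208)*(a^(2:ℕ))^(9:ℕ)*(u^(2:ℕ))^(0:ℕ) + (1027825152)*(a^(2:ℕ))^(9:ℕ)*(u^(2:ℕ))^(1:ℕ) + (31162112)*(a^(2:ℕ))^(9:ℕ)*(u^(2:ℕ))^(2:ℕ) + (264560)*(a^(2:ℕ))^(9:ℕ)*(u^(2:ℕ))^(3:ℕ) + (280)*(a^(2:ℕ))^(9:ℕ)*(u^(2:ℕ))^(4:ℕ) + (1891279872)*(a^(2:ℕ))^(10:ℕ)*(u^(2:ℕ))^(0:ℕ) + (146705920)*(a^(2:ℕ))^(10:ℕ)*(u^(2:ℕ))^(1:ℕ) + (2863584)*(a^(2:ℕ))^(10:ℕ)*(u^(2:ℕ))^(2:ℕ) + (11536)*(a^(2:ℕ))^(10:ℕ)*(u^(2:ℕ))^(3:ℕ) + (291297792)*(a^(2:ℕ))^(11:ℕ)*(u^(2:ℕ))^(0:ℕ)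 + (15715840)*(a^(2:ℕ))^(11:ℕ)*(u^(2:ℕ))^(1:ℕ) + (177168)*(a^(2:ℕ))^(11:ℕ)*(u^(2:ℕ))^(2:ℕ) + (224)*(a^(2:ℕ))^(11:ℕ)*(u^(2:ℕ))^(3:ℕ) + (35001344)*(a^(2:ℕ))^(12:ℕ)*(u^(2:ℕ))^(0:ℕ) + (1222816)*(a^(2:ℕ))^(12:ℕ)*(u^(2:ℕ))^(1:ℕ) + (6608)*(a^(2:ℕ))^(12:ℕ)*(u^(2:ℕ))^(2:ℕ) + (3211520)*(a^(2:ℕ))^(13:ℕ)*(u^(2:ℕ))^(0:ℕ) + (65200)*(a^(2:ℕ))^(13:ℕ)*(u^(2:ℕ))^(1:ℕ) + (112)*(a^(2:ℕ))^(13:ℕ)*(u^(2:ℕ))^(2:ℕ) + (217184)*(a^(2:ℕ))^(14:ℕ)*(u^(2:ℕ))^(0:ℕ) + (2128)*(a^(2:ℕ))^(14:ℕ)*(u^(2:ℕ))^(1:ℕ) + (10192)*(a^(2:ℕ))^(15:ℕ)*(u^(2:ℕ))^(0:ℕ) + (32)*(a^(2:ℕ))^(15:ℕ)*(u^(2:ℕ))^(1:ℕ)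 + (296)*(a^(2:ℕ))^(16:ℕ)*(u^(2:ℕ))^(0:ℕ) + (4)*(a^(2:ℕ))^(17:ℕ)*(u^(2:ℕ))^(0:ℕ)) := by
  have h1 : (0:ℝ) < (20713570304)*(a^(2:ℕ))^(0:ℕ)*(u^(2:ℕ))^(0:ℕ) := by norm_num
  have h2 : (0:ℝ) ≤ (32210026496)*(a^(2:ℕ))^(0:ℕ)*(u^(2:ℕ))^(1:ℕ) + (14545813504)*(a^(2:ℕ))^(0:ℕ)*(u^(2:ℕ))^(2:ℕ) + (1736376320)*(a^(2:ℕ))^(0:ℕ)*(u^(2:ℕ))^(3:ℕ) + (164663296)*(a^(2:ℕ))^(0:ℕ)*(u^(2:ℕ))^(4:ℕ) + (10234880)*(a^(2:ℕ))^(0:ℕ)*(u^(2:ℕ))^(5:ℕ) + (373248)*(a^(2:ℕ))^(0:ℕ)*(u^(2:ℕ))^(6:ℕ) + (7264)*(a^(2:ℕ))^(0:ℕ)*(u^(2:ℕ))^(7:ℕ) + (56)*(a^(2:ℕ))^(0:ℕ)*(u^(2:ℕ))^(8:ℕ) + (225381974016)*(a^(2:ℕ))^(1:ℕ)*(u^(2:ℕ))^(0:ℕ)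 + (171341316096)*(a^(2:ℕ))^(1:ℕ)*(u^(2:ℕ))^(1:ℕ) + (45511819264)*(a^(2:ℕ))^(1:ℕ)*(u^(2:ℕ))^(2:ℕ) + (5207195648)*(a^(2:ℕ))^(1:ℕ)*(u^(2:ℕ))^(3:ℕ) + (391948288)*(a^(2:ℕ))^(1:ℕ)*(u^(2:ℕ))^(4:ℕ) + (17487360)*(a^(2:ℕ))^(1:ℕ)*(u^(2:ℕ))^(5:ℕ) + (413952)*(a^(2:ℕ))^(1:ℕ)*(u^(2:ℕ))^(6:ℕ) + (4048)*(a^(2:ℕ))^(1:ℕ)*(u^(2:ℕ))^(7:ℕ) + (4)*(a^(2:ℕ))^(1:ℕ)*(u^(2:ℕ))^(8:ℕ) + (636992487424)*(a^(2:ℕ))^(2:ℕ)*(u^(2:ℕ))^(0:ℕ) + (347519057920)*(a^(2:ℕ))^(2:ℕ)*(u^(2:ℕ))^(1:ℕ) + (68788387840)*(a^(2:ℕ))^(2:ℕ)*(u^(2:ℕ))^(2:ℕ) + (6773276672)*(a^(2:ℕ))^(2:ℕ)*(u^(2:ℕ))^(3:ℕ) + (391070720)*(a^(2:ℕ))^(2:ℕ)*(u^(2:ℕ))^(4:ℕ)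 + (12183040)*(a^(2:ℕ))^(2:ℕ)*(u^(2:ℕ))^(5:ℕ) + (173216)*(a^(2:ℕ))^(2:ℕ)*(u^(2:ℕ))^(6:ℕ) + (688)*(a^(2:ℕ))^(2:ℕ)*(u^(2:ℕ))^(7:ℕ) + (949280374784)*(a^(2:ℕ))^(3:ℕ)*(u^(2:ℕ))^(0:ℕ) + (404033273856)*(a^(2:ℕ))^(3:ℕ)*(u^(2:ℕ))^(1:ℕ) + (63847792640)*(a^(2:ℕ))^(3:ℕ)*(u^(2:ℕ))^(2:ℕ) + (5100621824)*(a^(2:ℕ))^(3:ℕ)*(u^(2:ℕ))^(3:ℕ) + (218468864)*(a^(2:ℕ))^(3:ℕ)*(u^(2:ℕ))^(4:ℕ) + (4525568)*(a^(2:ℕ))^(3:ℕ)*(u^(2:ℕ))^(5:ℕ) + (34480)*(a^(2:ℕ))^(3:ℕ)*(u^(2:ℕ))^(6:ℕ) + (32)*(a^(2:ℕ))^(3:ℕ)*(u^(2:ℕ))^(7:ℕ) + (914955993088)*(a^(2:ℕ))^(4:ℕ)*(u^(2:ℕ))^(0:ℕ) + (313010290688)*(a^(2:ℕ))^(4:ℕ)*(u^(2:ℕ))^(1:ℕ)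 + (39940759552)*(a^(2:ℕ))^(4:ℕ)*(u^(2:ℕ))^(2:ℕ) + (2488199168)*(a^(2:ℕ))^(4:ℕ)*(u^(2:ℕ))^(3:ℕ) + (76011520)*(a^(2:ℕ))^(4:ℕ)*(u^(2:ℕ))^(4:ℕ) + (974304)*(a^(2:ℕ))^(4:ℕ)*(u^(2:ℕ))^(5:ℕ) + (3248)*(a^(2:ℕ))^(4:ℕ)*(u^(2:ℕ))^(6:ℕ) + (626724126720)*(a^(2:ℕ))^(5:ℕ)*(u^(2:ℕ))^(0:ℕ) + (173802881024)*(a^(2:ℕ))^(5:ℕ)*(u^(2:ℕ))^(1:ℕ) + (17701830656)*(a^(2:ℕ))^(5:ℕ)*(u^(2:ℕ))^(2:ℕ) + (829705216)*(a^(2:ℕ))^(5:ℕ)*(u^(2:ℕ))^(3:ℕ) + (17174272)*(a^(2:ℕ))^(5:ℕ)*(u^(2:ℕ))^(4:ℕ) + (121872)*(a^(2:ℕ))^(5:ℕ)*(u^(2:ℕ))^(5:ℕ) + (112)*(a^(2:ℕ))^(5:ℕ)*(u^(2:ℕ))^(6:ℕ) + (321262813184)*(a^(2:ℕ))^(6:ℕ)*(u^(2:ℕ))^(0:ℕ)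 + (71946698752)*(a^(2:ℕ))^(6:ℕ)*(u^(2:ℕ))^(1:ℕ) + (5718693888)*(a^(2:ℕ))^(6:ℕ)*(u^(2:ℕ))^(2:ℕ) + (193670144)*(a^(2:ℕ))^(6:ℕ)*(u^(2:ℕ))^(3:ℕ) + (2527520)*(a^(2:ℕ))^(6:ℕ)*(u^(2:ℕ))^(4:ℕ) + (8176)*(a^(2:ℕ))^(6:ℕ)*(u^(2:ℕ))^(5:ℕ) + (127033212928)*(a^(2:ℕ))^(7:ℕ)*(u^(2:ℕ))^(0:ℕ) + (22685069312)*(a^(2:ℕ))^(7:ℕ)*(u^(2:ℕ))^(1:ℕ) + (1365251072)*(a^(2:ℕ))^(7:ℕ)*(u^(2:ℕ))^(2:ℕ) + (31720448)*(a^(2:ℕ))^(7:ℕ)*(u^(2:ℕ))^(3:ℕ) + (233840)*(a^(2:ℕ))^(7:ℕ)*(u^(2:ℕ))^(4:ℕ) + (224)*(a^(2:ℕ))^(7:ℕ)*(u^(2:ℕ))^(5:ℕ) + (39435063296)*(a^(2:ℕ))^(8:ℕ)*(u^(2:ℕ))^(0:ℕ) + (5502610432)*(a^(2:ℕ))^(8:ℕ)*(u^(2:ℕ))^(1:ℕ)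 + (241172992)*(a^(2:ℕ))^(8:ℕ)*(u^(2:ℕ))^(2:ℕ) + (3577120)*(a^(2:ℕ))^(8:ℕ)*(u^(2:ℕ))^(3:ℕ) + (12320)*(a^(2:ℕ))^(8:ℕ)*(u^(2:ℕ))^(4:ℕ) + (9695582208)*(a^(2:ℕ))^(9:ℕ)*(u^(2:ℕ))^(0:ℕ) + (1027825152)*(a^(2:ℕ))^(9:ℕ)*(u^(2:ℕ))^(1:ℕ) + (31162112)*(a^(2:ℕ))^(9:ℕ)*(u^(2:ℕ))^(2:ℕ) + (264560)*(a^(2:ℕ))^(9:ℕ)*(u^(2:ℕ))^(3:ℕ) + (280)*(a^(2:ℕ))^(9:ℕ)*(u^(2:ℕ))^(4:ℕ) + (1891279872)*(a^(2:ℕ))^(10:ℕ)*(u^(2:ℕ))^(0:ℕ) + (146705920)*(a^(2:ℕ))^(10:ℕ)*(u^(2:ℕ))^(1:ℕ) + (2863584)*(a^(2:ℕ))^(10:ℕ)*(u^(2:ℕ))^(2:ℕ) + (11536)*(a^(2:ℕ))^(10:ℕ)*(u^(2:ℕ))^(3:ℕ) + (291297792)*(a^(2:ℕ))^(11:ℕ)*(u^(2:ℕ))^(0:ℕ)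 + (15715840)*(a^(2:ℕ))^(11:ℕ)*(u^(2:ℕ))^(1:ℕ) + (177168)*(a^(2:ℕ))^(11:ℕ)*(u^(2:ℕ))^(2:ℕ) + (224)*(a^(2:ℕ))^(11:ℕ)*(u^(2:ℕ))^(3:ℕ) + (35001344)*(a^(2:ℕ))^(12:ℕ)*(u^(2:ℕ))^(0:ℕ) + (1222816)*(a^(2:ℕ))^(12:ℕ)*(u^(2:ℕ))^(1:ℕ) + (6608)*(a^(2:ℕ))^(12:ℕ)*(u^(2:ℕ))^(2:ℕ) + (3211520)*(a^(2:ℕ))^(13:ℕ)*(u^(2:ℕ))^(0:ℕ) + (65200)*(a^(2:ℕ))^(13:ℕ)*(u^(2:ℕ))^(1:ℕ) + (112)*(a^(2:ℕ))^(13:ℕ)*(u^(2:ℕ))^(2:ℕ) + (217184)*(a^(2:ℕ))^(14:ℕ)*(u^(2:ℕ))^(0:ℕ) + (2128)*(a^(2:ℕ))^(14:ℕ)*(u^(2:ℕ))^(1:ℕ) + (10192)*(a^(2:ℕ))^(15:ℕ)*(u^(2:ℕ))^(0:ℕ) + (32)*(a^(2:ℕ))^(15:ℕ)*(u^(2:ℕ))^(1:ℕ)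 + (296)*(a^(2:ℕ))^(16:ℕ)*(u^(2:ℕ))^(0:ℕ) + (4)*(a^(2:ℕ))^(17:ℕ)*(u^(2:ℕ))^(0:ℕ) := by positivity
  linarith

lemma Kpairaux (a u : ℝ) :
    (0:ℝ) < (46944)*(a^(2:ℕ))^(0:ℕ)*(u^(2:ℕ))^(0:ℕ) + ((182418)*(a^(2:ℕ))^(0:ℕ)*(u^(2:ℕ))^(1:ℕ) + (307302)*(a^(2:ℕ))^(0:ℕ)*(u^(2:ℕ))^(2:ℕ) + (294656)*(a^(2:ℕ))^(0:ℕ)*(u^(2:ℕ))^(3:ℕ) + (177376)*(a^(2:ℕ))^(0:ℕ)*(u^(2:ℕ))^(4:ℕ) + (69152)*(a^(2:ℕ))^(0:ℕ)*(u^(2:ℕ))^(5:ℕ) + (17152)*(a^(2:ℕ))^(0:ℕ)*(u^(2:ℕ))^(6:ℕ) + (2486)*(a^(2:ℕ))^(0:ℕ)*(u^(2:ℕ))^(7:ℕ) + (162)*(a^(2:ℕ))^(0:ℕ)*(u^(2:ℕ))^(8:ℕ) + (182418)*(a^(2:ℕ))^(1:ℕ)*(u^(2:ℕ))^(0:ℕ)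 + (773079)*(a^(2:ℕ))^(1:ℕ)*(u^(2:ℕ))^(1:ℕ) + (1389083)*(a^(2:ℕ))^(1:ℕ)*(u^(2:ℕ))^(2:ℕ) + (1400704)*(a^(2:ℕ))^(1:ℕ)*(u^(2:ℕ))^(3:ℕ) + (878384)*(a^(2:ℕ))^(1:ℕ)*(u^(2:ℕ))^(4:ℕ) + (353872)*(a^(2:ℕ))^(1:ℕ)*(u^(2:ℕ))^(5:ℕ) + (89990)*(a^(2:ℕ))^(1:ℕ)*(u^(2:ℕ))^(6:ℕ) + (13269)*(a^(2:ℕ))^(1:ℕ)*(u^(2:ℕ))^(7:ℕ) + (873)*(a^(2:ℕ))^(1:ℕ)*(u^(2:ℕ))^(8:ℕ) + (307302)*(a^(2:ℕ))^(2:ℕ)*(u^(2:ℕ))^(0:ℕ) + (1389083)*(a^(2:ℕ))^(2:ℕ)*(u^(2:ℕ))^(1:ℕ) + (2604457)*(a^(2:ℕ))^(2:ℕ)*(u^(2:ℕ))^(2:ℕ) + (2708502)*(a^(2:ℕ))^(2:ℕ)*(u^(2:ℕ))^(3:ℕ) + (1738518)*(a^(2:ℕ))^(2:ℕ)*(u^(2:ℕ))^(4:ℕ)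 + (712314)*(a^(2:ℕ))^(2:ℕ)*(u^(2:ℕ))^(5:ℕ) + (183116)*(a^(2:ℕ))^(2:ℕ)*(u^(2:ℕ))^(6:ℕ) + (27139)*(a^(2:ℕ))^(2:ℕ)*(u^(2:ℕ))^(7:ℕ) + (1785)*(a^(2:ℕ))^(2:ℕ)*(u^(2:ℕ))^(8:ℕ) + (294656)*(a^(2:ℕ))^(3:ℕ)*(u^(2:ℕ))^(0:ℕ) + (1400704)*(a^(2:ℕ))^(3:ℕ)*(u^(2:ℕ))^(1:ℕ) + (2708502)*(a^(2:ℕ))^(3:ℕ)*(u^(2:ℕ))^(2:ℕ) + (2877144)*(a^(2:ℕ))^(3:ℕ)*(u^(2:ℕ))^(3:ℕ) + (1874412)*(a^(2:ℕ))^(3:ℕ)*(u^(2:ℕ))^(4:ℕ) + (775160)*(a^(2:ℕ))^(3:ℕ)*(u^(2:ℕ))^(5:ℕ) + (200080)*(a^(2:ℕ))^(3:ℕ)*(u^(2:ℕ))^(6:ℕ) + (29628)*(a^(2:ℕ))^(3:ℕ)*(u^(2:ℕ))^(7:ℕ) + (1938)*(a^(2:ℕ))^(3:ℕ)*(u^(2:ℕ))^(8:ℕ)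 + (177376)*(a^(2:ℕ))^(4:ℕ)*(u^(2:ℕ))^(0:ℕ) + (878384)*(a^(2:ℕ))^(4:ℕ)*(u^(2:ℕ))^(1:ℕ) + (1738518)*(a^(2:ℕ))^(4:ℕ)*(u^(2:ℕ))^(2:ℕ) + (1874412)*(a^(2:ℕ))^(4:ℕ)*(u^(2:ℕ))^(3:ℕ) + (1232216)*(a^(2:ℕ))^(4:ℕ)*(u^(2:ℕ))^(4:ℕ) + (511536)*(a^(2:ℕ))^(4:ℕ)*(u^(2:ℕ))^(5:ℕ) + (131900)*(a^(2:ℕ))^(4:ℕ)*(u^(2:ℕ))^(6:ℕ) + (19424)*(a^(2:ℕ))^(4:ℕ)*(u^(2:ℕ))^(7:ℕ) + (1258)*(a^(2:ℕ))^(4:ℕ)*(u^(2:ℕ))^(8:ℕ) + (69152)*(a^(2:ℕ))^(5:ℕ)*(u^(2:ℕ))^(0:ℕ) + (353872)*(a^(2:ℕ))^(5:ℕ)*(u^(2:ℕ))^(1:ℕ) + (712314)*(a^(2:ℕ))^(5:ℕ)*(u^(2:ℕ))^(2:ℕ) + (775160)*(a^(2:ℕ))^(5:ℕ)*(u^(2:ℕ))^(3:ℕ)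 + (511536)*(a^(2:ℕ))^(5:ℕ)*(u^(2:ℕ))^(4:ℕ) + (212124)*(a^(2:ℕ))^(5:ℕ)*(u^(2:ℕ))^(5:ℕ) + (54384)*(a^(2:ℕ))^(5:ℕ)*(u^(2:ℕ))^(6:ℕ) + (7928)*(a^(2:ℕ))^(5:ℕ)*(u^(2:ℕ))^(7:ℕ) + (506)*(a^(2:ℕ))^(5:ℕ)*(u^(2:ℕ))^(8:ℕ) + (17152)*(a^(2:ℕ))^(6:ℕ)*(u^(2:ℕ))^(0:ℕ) + (89990)*(a^(2:ℕ))^(6:ℕ)*(u^(2:ℕ))^(1:ℕ) + (183116)*(a^(2:ℕ))^(6:ℕ)*(u^(2:ℕ))^(2:ℕ) + (200080)*(a^(2:ℕ))^(6:ℕ)*(u^(2:ℕ))^(3:ℕ) + (131900)*(a^(2:ℕ))^(6:ℕ)*(u^(2:ℕ))^(4:ℕ) + (54384)*(a^(2:ℕ))^(6:ℕ)*(u^(2:ℕ))^(5:ℕ) + (13800)*(a^(2:ℕ))^(6:ℕ)*(u^(2:ℕ))^(6:ℕ) + (1982)*(a^(2:ℕ))^(6:ℕ)*(u^(2:ℕ))^(7:ℕ)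 + (124)*(a^(2:ℕ))^(6:ℕ)*(u^(2:ℕ))^(8:ℕ) + (2486)*(a^(2:ℕ))^(7:ℕ)*(u^(2:ℕ))^(0:ℕ) + (13269)*(a^(2:ℕ))^(7:ℕ)*(u^(2:ℕ))^(1:ℕ) + (27139)*(a^(2:ℕ))^(7:ℕ)*(u^(2:ℕ))^(2:ℕ) + (29628)*(a^(2:ℕ))^(7:ℕ)*(u^(2:ℕ))^(3:ℕ) + (19424)*(a^(2:ℕ))^(7:ℕ)*(u^(2:ℕ))^(4:ℕ) + (7928)*(a^(2:ℕ))^(7:ℕ)*(u^(2:ℕ))^(5:ℕ) + (1982)*(a^(2:ℕ))^(7:ℕ)*(u^(2:ℕ))^(6:ℕ) + (279)*(a^(2:ℕ))^(7:ℕ)*(u^(2:ℕ))^(7:ℕ) + (17)*(a^(2:ℕ))^(7:ℕ)*(u^(2:ℕ))^(8:ℕ) + (162)*(a^(2:ℕ))^(8:ℕ)*(u^(2:ℕ))^(0:ℕ) + (873)*(a^(2:ℕ))^(8:ℕ)*(u^(2:ℕ))^(1:ℕ) + (1785)*(a^(2:ℕ))^(8:ℕ)*(u^(2:ℕ))^(2:ℕ)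 + (1938)*(a^(2:ℕ))^(8:ℕ)*(u^(2:ℕ))^(3:ℕ) + (1258)*(a^(2:ℕ))^(8:ℕ)*(u^(2:ℕ))^(4:ℕ) + (506)*(a^(2:ℕ))^(8:ℕ)*(u^(2:ℕ))^(5:ℕ) + (124)*(a^(2:ℕ))^(8:ℕ)*(u^(2:ℕ))^(6:ℕ) + (17)*(a^(2:ℕ))^(8:ℕ)*(u^(2:ℕ))^(7:ℕ) + (1)*(a^(2:ℕ))^(8:ℕ)*(u^(2:ℕ))^(8:ℕ)) := by
  have h1 : (0:ℝ) < (46944)*(a^(2:ℕ))^(0:ℕ)*(u^(2:ℕ))^(0:ℕ) := by norm_num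
  have h2 : (0:ℝ) ≤ (182418)*(a^(2:ℕ))^(0:ℕ)*(u^(2:ℕ))^(1:ℕ) + (307302)*(a^(2:ℕ))^(0:ℕ)*(u^(2:ℕ))^(2:ℕ) + (294656)*(a^(2:ℕ))^(0:ℕ)*(u^(2:ℕ))^(3:ℕ) + (177376)*(a^(2:ℕ))^(0:ℕ)*(u^(2:ℕ))^(4:ℕ) + (69152)*(a^(2:ℕ))^(0:ℕ)*(u^(2:ℕ))^(5:ℕ) + (17152)*(a^(2:ℕ))^(0:ℕ)*(u^(2:ℕ))^(6:ℕ) + (2486)*(a^(2:ℕ))^(0:ℕ)*(u^(2:ℕ))^(7:ℕ) + (162)*(a^(2:ℕ))^(0:ℕ)*(u^(2:ℕ))^(8:ℕ) + (182418)*(a^(2:ℕ))^(1:ℕ)*(u^(2:ℕ))^(0:ℕ) + (773079)*(a^(2:ℕ))^(1:ℕ)*(u^(2:ℕ))^(1:ℕ) + (1389083)*(a^(2:ℕ))^(1:ℕ)*(u^(2:ℕ))^(2:ℕ) + (1400704)*(a^(2:ℕ))^(1:ℕ)*(u^(2:ℕ))^(3:ℕ) + (878384)*(a^(2:ℕ))^(1:ℕ)*(u^(2:ℕ))^(4:ℕ)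 + (353872)*(a^(2:ℕ))^(1:ℕ)*(u^(2:ℕ))^(5:ℕ) + (89990)*(a^(2:ℕ))^(1:ℕ)*(u^(2:ℕ))^(6:ℕ) + (13269)*(a^(2:ℕ))^(1:ℕ)*(u^(2:ℕ))^(7:ℕ) + (873)*(a^(2:ℕ))^(1:ℕ)*(u^(2:ℕ))^(8:ℕ) + (307302)*(a^(2:ℕ))^(2:ℕ)*(u^(2:ℕ))^(0:ℕ) + (1389083)*(a^(2:ℕ))^(2:ℕ)*(u^(2:ℕ))^(1:ℕ) + (2604457)*(a^(2:ℕ))^(2:ℕ)*(u^(2:ℕ))^(2:ℕ) + (2708502)*(a^(2:ℕ))^(2:ℕ)*(u^(2:ℕ))^(3:ℕ) + (1738518)*(a^(2:ℕ))^(2:ℕ)*(u^(2:ℕ))^(4:ℕ) + (712314)*(a^(2:ℕ))^(2:ℕ)*(u^(2:ℕ))^(5:ℕ) + (183116)*(a^(2:ℕ))^(2:ℕ)*(u^(2:ℕ))^(6:ℕ) + (27139)*(a^(2:ℕ))^(2:ℕ)*(u^(2:ℕ))^(7:ℕ) + (1785)*(a^(2:ℕ))^(2:ℕ)*(u^(2:ℕ))^(8:ℕ)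 + (294656)*(a^(2:ℕ))^(3:ℕ)*(u^(2:ℕ))^(0:ℕ) + (1400704)*(a^(2:ℕ))^(3:ℕ)*(u^(2:ℕ))^(1:ℕ) + (2708502)*(a^(2:ℕ))^(3:ℕ)*(u^(2:ℕ))^(2:ℕ) + (2877144)*(a^(2:ℕ))^(3:ℕ)*(u^(2:ℕ))^(3:ℕ) + (1874412)*(a^(2:ℕ))^(3:ℕ)*(u^(2:ℕ))^(4:ℕ) + (775160)*(a^(2:ℕ))^(3:ℕ)*(u^(2:ℕ))^(5:ℕ) + (200080)*(a^(2:ℕ))^(3:ℕ)*(u^(2:ℕ))^(6:ℕ) + (29628)*(a^(2:ℕ))^(3:ℕ)*(u^(2:ℕ))^(7:ℕ) + (1938)*(a^(2:ℕ))^(3:ℕ)*(u^(2:ℕ))^(8:ℕ) + (177376)*(a^(2:ℕ))^(4:ℕ)*(u^(2:ℕ))^(0:ℕ) + (878384)*(a^(2:ℕ))^(4:ℕ)*(u^(2:ℕ))^(1:ℕ) + (1738518)*(a^(2:ℕ))^(4:ℕ)*(u^(2:ℕ))^(2:ℕ) + (1874412)*(a^(2:ℕ))^(4:ℕ)*(u^(2:ℕ))^(3:ℕ)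 + (1232216)*(a^(2:ℕ))^(4:ℕ)*(u^(2:ℕ))^(4:ℕ) + (511536)*(a^(2:ℕ))^(4:ℕ)*(u^(2:ℕ))^(5:ℕ) + (131900)*(a^(2:ℕ))^(4:ℕ)*(u^(2:ℕ))^(6:ℕ) + (19424)*(a^(2:ℕ))^(4:ℕ)*(u^(2:ℕ))^(7:ℕ) + (1258)*(a^(2:ℕ))^(4:ℕ)*(u^(2:ℕ))^(8:ℕ) + (69152)*(a^(2:ℕ))^(5:ℕ)*(u^(2:ℕ))^(0:ℕ) + (353872)*(a^(2:ℕ))^(5:ℕ)*(u^(2:ℕ))^(1:ℕ) + (712314)*(a^(2:ℕ))^(5:ℕ)*(u^(2:ℕ))^(2:ℕ) + (775160)*(a^(2:ℕ))^(5:ℕ)*(u^(2:ℕ))^(3:ℕ) + (511536)*(a^(2:ℕ))^(5:ℕ)*(u^(2:ℕ))^(4:ℕ) + (212124)*(a^(2:ℕ))^(5:ℕ)*(u^(2:ℕ))^(5:ℕ) + (54384)*(a^(2:ℕ))^(5:ℕ)*(u^(2:ℕ))^(6:ℕ) + (7928)*(a^(2:ℕ))^(5:ℕ)*(u^(2:ℕ))^(7:ℕ)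 + (506)*(a^(2:ℕ))^(5:ℕ)*(u^(2:ℕ))^(8:ℕ) + (17152)*(a^(2:ℕ))^(6:ℕ)*(u^(2:ℕ))^(0:ℕ) + (89990)*(a^(2:ℕ))^(6:ℕ)*(u^(2:ℕ))^(1:ℕ) + (183116)*(a^(2:ℕ))^(6:ℕ)*(u^(2:ℕ))^(2:ℕ) + (200080)*(a^(2:ℕ))^(6:ℕ)*(u^(2:ℕ))^(3:ℕ) + (131900)*(a^(2:ℕ))^(6:ℕ)*(u^(2:ℕ))^(4:ℕ) + (54384)*(a^(2:ℕ))^(6:ℕ)*(u^(2:ℕ))^(5:ℕ) + (13800)*(a^(2:ℕ))^(6:ℕ)*(u^(2:ℕ))^(6:ℕ) + (1982)*(a^(2:ℕ))^(6:ℕ)*(u^(2:ℕ))^(7:ℕ) + (124)*(a^(2:ℕ))^(6:ℕ)*(u^(2:ℕ))^(8:ℕ) + (2486)*(a^(2:ℕ))^(7:ℕ)*(u^(2:ℕ))^(0:ℕ) + (13269)*(a^(2:ℕ))^(7:ℕ)*(u^(2:ℕ))^(1:ℕ) + (27139)*(a^(2:ℕ))^(7:ℕ)*(u^(2:ℕ))^(2:ℕ)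 + (29628)*(a^(2:ℕ))^(7:ℕ)*(u^(2:ℕ))^(3:ℕ) + (19424)*(a^(2:ℕ))^(7:ℕ)*(u^(2:ℕ))^(4:ℕ) + (7928)*(a^(2:ℕ))^(7:ℕ)*(u^(2:ℕ))^(5:ℕ) + (1982)*(a^(2:ℕ))^(7:ℕ)*(u^(2:ℕ))^(6:ℕ) + (279)*(a^(2:ℕ))^(7:ℕ)*(u^(2:ℕ))^(7:ℕ) + (17)*(a^(2:ℕ))^(7:ℕ)*(u^(2:ℕ))^(8:ℕ) + (162)*(a^(2:ℕ))^(8:ℕ)*(u^(2:ℕ))^(0:ℕ) + (873)*(a^(2:ℕ))^(8:ℕ)*(u^(2:ℕ))^(1:ℕ) + (1785)*(a^(2:ℕ))^(8:ℕ)*(u^(2:ℕ))^(2:ℕ) + (1938)*(a^(2:ℕ))^(8:ℕ)*(u^(2:ℕ))^(3:ℕ) + (1258)*(a^(2:ℕ))^(8:ℕ)*(u^(2:ℕ))^(4:ℕ) + (506)*(a^(2:ℕ))^(8:ℕ)*(u^(2:ℕ))^(5:ℕ) + (124)*(a^(2:ℕ))^(8:ℕ)*(u^(2:ℕ))^(6:ℕ)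 + (17)*(a^(2:ℕ))^(8:ℕ)*(u^(2:ℕ))^(7:ℕ) + (1)*(a^(2:ℕ))^(8:ℕ)*(u^(2:ℕ))^(8:ℕ) := by positivity
  linarith

lemma L1baux (p q g : ℝ) (hpq : p^(2:ℕ) + q^(2:ℕ) = 6) :
    (0:ℝ) < (79016)*(p^(2:ℕ))^(0:ℕ)*(q^(2:ℕ))^(10:ℕ)*(g^(2:ℕ))^(0:ℕ) + ((571592)*(p^(2:ℕ))^(10:ℕ)*(q^(2:ℕ))^(0:ℕ)*(g^(2:ℕ))^(0:ℕ) + ((1529408)*(p^(2:ℕ))^(1:ℕ)*(q^(2:ℕ))^(9:ℕ)*(g^(2:ℕ))^(0:ℕ) + (32866056)*(p^(2:ℕ))^(2:ℕ)*(q^(2:ℕ))^(8:ℕ)*(g^(2:ℕ))^(0:ℕ) + (7855008)*(p^(2:ℕ))^(3:ℕ)*(q^(2:ℕ))^(7:ℕ)*(g^(2:ℕ))^(0:ℕ) + (14663472)*(p^(2:ℕ))^(4:ℕ)*(q^(2:ℕ))^(6:ℕ)*(g^(2:ℕ))^(0:ℕ) + (140351904)*(p^(2:ℕ))^(5:ℕ)*(q^(2:ℕ))^(5:ℕ)*(g^(2:ℕ))^(0:ℕ)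 + (175228080)*(p^(2:ℕ))^(6:ℕ)*(q^(2:ℕ))^(4:ℕ)*(g^(2:ℕ))^(0:ℕ) + (101142240)*(p^(2:ℕ))^(7:ℕ)*(q^(2:ℕ))^(3:ℕ)*(g^(2:ℕ))^(0:ℕ) + (34164648)*(p^(2:ℕ))^(8:ℕ)*(q^(2:ℕ))^(2:ℕ)*(g^(2:ℕ))^(0:ℕ) + (6694304)*(p^(2:ℕ))^(9:ℕ)*(q^(2:ℕ))^(1:ℕ)*(g^(2:ℕ))^(0:ℕ) + (17693496)*(p^(2:ℕ))^(0:ℕ)*(q^(2:ℕ))^(8:ℕ)*(g^(2:ℕ))^(1:ℕ) + (343888776)*(p^(2:ℕ))^(1:ℕ)*(q^(2:ℕ))^(7:ℕ)*(g^(2:ℕ))^(1:ℕ) + (401410152)*(p^(2:ℕ))^(2:ℕ)*(q^(2:ℕ))^(6:ℕ)*(g^(2:ℕ))^(1:ℕ) + (1126309896)*(p^(2:ℕ))^(3:ℕ)*(q^(2:ℕ))^(5:ℕ)*(g^(2:ℕ))^(1:ℕ) + (3239918424)*(p^(2:ℕ))^(4:ℕ)*(q^(2:ℕ))^(4:ℕ)*(g^(2:ℕ))^(1:ℕ)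 + (3209990616)*(p^(2:ℕ))^(5:ℕ)*(q^(2:ℕ))^(3:ℕ)*(g^(2:ℕ))^(1:ℕ) + (1550633400)*(p^(2:ℕ))^(6:ℕ)*(q^(2:ℕ))^(2:ℕ)*(g^(2:ℕ))^(1:ℕ) + (387933336)*(p^(2:ℕ))^(7:ℕ)*(q^(2:ℕ))^(1:ℕ)*(g^(2:ℕ))^(1:ℕ) + (39865680)*(p^(2:ℕ))^(8:ℕ)*(q^(2:ℕ))^(0:ℕ)*(g^(2:ℕ))^(1:ℕ) + (191766096)*(p^(2:ℕ))^(0:ℕ)*(q^(2:ℕ))^(7:ℕ)*(g^(2:ℕ))^(2:ℕ) + (1038708576)*(p^(2:ℕ))^(1:ℕ)*(q^(2:ℕ))^(6:ℕ)*(g^(2:ℕ))^(2:ℕ) + (3077148528)*(p^(2:ℕ))^(2:ℕ)*(q^(2:ℕ))^(5:ℕ)*(g^(2:ℕ))^(2:ℕ) + (7710667776)*(p^(2:ℕ))^(3:ℕ)*(q^(2:ℕ))^(4:ℕ)*(g^(2:ℕ))^(2:ℕ) + (9661846320)*(p^(2:ℕ))^(4:ℕ)*(q^(2:ℕ))^(3:ℕ)*(g^(2:ℕ))^(2:ℕ)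 + (5910089184)*(p^(2:ℕ))^(5:ℕ)*(q^(2:ℕ))^(2:ℕ)*(g^(2:ℕ))^(2:ℕ) + (1750423824)*(p^(2:ℕ))^(6:ℕ)*(q^(2:ℕ))^(1:ℕ)*(g^(2:ℕ))^(2:ℕ) + (203117760)*(p^(2:ℕ))^(7:ℕ)*(q^(2:ℕ))^(0:ℕ)*(g^(2:ℕ))^(2:ℕ) + (549400320)*(p^(2:ℕ))^(0:ℕ)*(q^(2:ℕ))^(6:ℕ)*(g^(2:ℕ))^(3:ℕ) + (3414161664)*(p^(2:ℕ))^(1:ℕ)*(q^(2:ℕ))^(5:ℕ)*(g^(2:ℕ))^(3:ℕ) + (10226310912)*(p^(2:ℕ))^(2:ℕ)*(q^(2:ℕ))^(4:ℕ)*(g^(2:ℕ))^(3:ℕ) + (15974879616)*(p^(2:ℕ))^(3:ℕ)*(q^(2:ℕ))^(3:ℕ)*(g^(2:ℕ))^(3:ℕ) + (12307821696)*(p^(2:ℕ))^(4:ℕ)*(q^(2:ℕ))^(2:ℕ)*(g^(2:ℕ))^(3:ℕ) + (4406348160)*(p^(2:ℕ))^(5:ℕ)*(q^(2:ℕ))^(1:ℕ)*(g^(2:ℕ))^(3:ℕ)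 + (590924160)*(p^(2:ℕ))^(6:ℕ)*(q^(2:ℕ))^(0:ℕ)*(g^(2:ℕ))^(3:ℕ) + (1250411904)*(p^(2:ℕ))^(0:ℕ)*(q^(2:ℕ))^(5:ℕ)*(g^(2:ℕ))^(4:ℕ) + (7046984448)*(p^(2:ℕ))^(1:ℕ)*(q^(2:ℕ))^(4:ℕ)*(g^(2:ℕ))^(4:ℕ) + (15333898752)*(p^(2:ℕ))^(2:ℕ)*(q^(2:ℕ))^(3:ℕ)*(g^(2:ℕ))^(4:ℕ) + (15382420992)*(p^(2:ℕ))^(3:ℕ)*(q^(2:ℕ))^(2:ℕ)*(g^(2:ℕ))^(4:ℕ) + (6799800960)*(p^(2:ℕ))^(4:ℕ)*(q^(2:ℕ))^(1:ℕ)*(g^(2:ℕ))^(4:ℕ) + (1075638528)*(p^(2:ℕ))^(5:ℕ)*(q^(2:ℕ))^(0:ℕ)*(g^(2:ℕ))^(4:ℕ) + (1865306880)*(p^(2:ℕ))^(0:ℕ)*(q^(2:ℕ))^(4:ℕ)*(g^(2:ℕ))^(5:ℕ) + (7929840384)*(p^(2:ℕ))^(1:ℕ)*(q^(2:ℕ))^(3:ℕ)*(g^(2:ℕ))^(5:ℕ)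 + (11526084864)*(p^(2:ℕ))^(2:ℕ)*(q^(2:ℕ))^(2:ℕ)*(g^(2:ℕ))^(5:ℕ) + (6602943744)*(p^(2:ℕ))^(3:ℕ)*(q^(2:ℕ))^(1:ℕ)*(g^(2:ℕ))^(5:ℕ) + (1262324736)*(p^(2:ℕ))^(4:ℕ)*(q^(2:ℕ))^(0:ℕ)*(g^(2:ℕ))^(5:ℕ) + (1632586752)*(p^(2:ℕ))^(0:ℕ)*(q^(2:ℕ))^(3:ℕ)*(g^(2:ℕ))^(6:ℕ) + (4709643264)*(p^(2:ℕ))^(1:ℕ)*(q^(2:ℕ))^(2:ℕ)*(g^(2:ℕ))^(6:ℕ) + (3896709120)*(p^(2:ℕ))^(2:ℕ)*(q^(2:ℕ))^(1:ℕ)*(g^(2:ℕ))^(6:ℕ) + (940584960)*(p^(2:ℕ))^(3:ℕ)*(q^(2:ℕ))^(0:ℕ)*(g^(2:ℕ))^(6:ℕ) + (762545664)*(p^(2:ℕ))^(0:ℕ)*(q^(2:ℕ))^(2:ℕ)*(g^(2:ℕ))^(7:ℕ) + (1232838144)*(p^(2:ℕ))^(1:ℕ)*(q^(2:ℕ))^(1:ℕ)*(g^(2:ℕ))^(7:ℕ)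 + (409826304)*(p^(2:ℕ))^(2:ℕ)*(q^(2:ℕ))^(0:ℕ)*(g^(2:ℕ))^(7:ℕ) + (141087744)*(p^(2:ℕ))^(0:ℕ)*(q^(2:ℕ))^(1:ℕ)*(g^(2:ℕ))^(8:ℕ) + (80621568)*(p^(2:ℕ))^(1:ℕ)*(q^(2:ℕ))^(0:ℕ)*(g^(2:ℕ))^(8:ℕ))) := by
  have hrest : (0:ℝ) ≤ (1529408)*(p^(2:ℕ))^(1:ℕ)*(q^(2:ℕ))^(9:ℕ)*(g^(2:ℕ))^(0:ℕ) + (32866056)*(p^(2:ℕ))^(2:ℕ)*(q^(2:ℕ))^(8:ℕ)*(g^(2:ℕ))^(0:ℕ) + (7855008)*(p^(2:ℕ))^(3:ℕ)*(q^(2:ℕ))^(7:ℕ)*(g^(2:ℕ))^(0:ℕ) + (14663472)*(p^(2:ℕ))^(4:ℕ)*(q^(2:ℕ))^(6:ℕ)*(g^(2:ℕ))^(0:ℕ) + (140351904)*(p^(2:ℕ))^(5:ℕ)*(q^(2:ℕ))^(5:ℕ)*(g^(2:ℕ))^(0:ℕ) + (175228080)*(p^(2:ℕ))^(6:ℕ)*(q^(2:ℕ))^(4:ℕ)*(g^(2:ℕ))^(0:ℕ)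 + (101142240)*(p^(2:ℕ))^(7:ℕ)*(q^(2:ℕ))^(3:ℕ)*(g^(2:ℕ))^(0:ℕ) + (34164648)*(p^(2:ℕ))^(8:ℕ)*(q^(2:ℕ))^(2:ℕ)*(g^(2:ℕ))^(0:ℕ) + (6694304)*(p^(2:ℕ))^(9:ℕ)*(q^(2:ℕ))^(1:ℕ)*(g^(2:ℕ))^(0:ℕ) + (17693496)*(p^(2:ℕ))^(0:ℕ)*(q^(2:ℕ))^(8:ℕ)*(g^(2:ℕ))^(1:ℕ) + (343888776)*(p^(2:ℕ))^(1:ℕ)*(q^(2:ℕ))^(7:ℕ)*(g^(2:ℕ))^(1:ℕ) + (401410152)*(p^(2:ℕ))^(2:ℕ)*(q^(2:ℕ))^(6:ℕ)*(g^(2:ℕ))^(1:ℕ) + (1126309896)*(p^(2:ℕ))^(3:ℕ)*(q^(2:ℕ))^(5:ℕ)*(g^(2:ℕ))^(1:ℕ) + (3239918424)*(p^(2:ℕ))^(4:ℕ)*(q^(2:ℕ))^(4:ℕ)*(g^(2:ℕ))^(1:ℕ) + (3209990616)*(p^(2:ℕ))^(5:ℕ)*(q^(2:ℕ))^(3:ℕ)*(g^(2:ℕ))^(1:ℕ)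 + (1550633400)*(p^(2:ℕ))^(6:ℕ)*(q^(2:ℕ))^(2:ℕ)*(g^(2:ℕ))^(1:ℕ) + (387933336)*(p^(2:ℕ))^(7:ℕ)*(q^(2:ℕ))^(1:ℕ)*(g^(2:ℕ))^(1:ℕ) + (39865680)*(p^(2:ℕ))^(8:ℕ)*(q^(2:ℕ))^(0:ℕ)*(g^(2:ℕ))^(1:ℕ) + (191766096)*(p^(2:ℕ))^(0:ℕ)*(q^(2:ℕ))^(7:ℕ)*(g^(2:ℕ))^(2:ℕ) + (1038708576)*(p^(2:ℕ))^(1:ℕ)*(q^(2:ℕ))^(6:ℕ)*(g^(2:ℕ))^(2:ℕ) + (3077148528)*(p^(2:ℕ))^(2:ℕ)*(q^(2:ℕ))^(5:ℕ)*(g^(2:ℕ))^(2:ℕ) + (7710667776)*(p^(2:ℕ))^(3:ℕ)*(q^(2:ℕ))^(4:ℕ)*(g^(2:ℕ))^(2:ℕ) + (9661846320)*(p^(2:ℕ))^(4:ℕ)*(q^(2:ℕ))^(3:ℕ)*(g^(2:ℕ))^(2:ℕ) + (5910089184)*(p^(2:ℕ))^(5:ℕ)*(q^(2:ℕ))^(2:ℕ)*(g^(2:ℕ))^(2:ℕ)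 + (1750423824)*(p^(2:ℕ))^(6:ℕ)*(q^(2:ℕ))^(1:ℕ)*(g^(2:ℕ))^(2:ℕ) + (203117760)*(p^(2:ℕ))^(7:ℕ)*(q^(2:ℕ))^(0:ℕ)*(g^(2:ℕ))^(2:ℕ) + (549400320)*(p^(2:ℕ))^(0:ℕ)*(q^(2:ℕ))^(6:ℕ)*(g^(2:ℕ))^(3:ℕ) + (3414161664)*(p^(2:ℕ))^(1:ℕ)*(q^(2:ℕ))^(5:ℕ)*(g^(2:ℕ))^(3:ℕ) + (10226310912)*(p^(2:ℕ))^(2:ℕ)*(q^(2:ℕ))^(4:ℕ)*(g^(2:ℕ))^(3:ℕ) + (15974879616)*(p^(2:ℕ))^(3:ℕ)*(q^(2:ℕ))^(3:ℕ)*(g^(2:ℕ))^(3:ℕ) + (12307821696)*(p^(2:ℕ))^(4:ℕ)*(q^(2:ℕ))^(2:ℕ)*(g^(2:ℕ))^(3:ℕ) + (4406348160)*(p^(2:ℕ))^(5:ℕ)*(q^(2:ℕ))^(1:ℕ)*(g^(2:ℕ))^(3:ℕ) + (590924160)*(p^(2:ℕ))^(6:ℕ)*(q^(2:ℕ))^(0:ℕ)*(g^(2:ℕ))^(3:ℕ)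 + (1250411904)*(p^(2:ℕ))^(0:ℕ)*(q^(2:ℕ))^(5:ℕ)*(g^(2:ℕ))^(4:ℕ) + (7046984448)*(p^(2:ℕ))^(1:ℕ)*(q^(2:ℕ))^(4:ℕ)*(g^(2:ℕ))^(4:ℕ) + (15333898752)*(p^(2:ℕ))^(2:ℕ)*(q^(2:ℕ))^(3:ℕ)*(g^(2:ℕ))^(4:ℕ) + (15382420992)*(p^(2:ℕ))^(3:ℕ)*(q^(2:ℕ))^(2:ℕ)*(g^(2:ℕ))^(4:ℕ) + (6799800960)*(p^(2:ℕ))^(4:ℕ)*(q^(2:ℕ))^(1:ℕ)*(g^(2:ℕ))^(4:ℕ) + (1075638528)*(p^(2:ℕ))^(5:ℕ)*(q^(2:ℕ))^(0:ℕ)*(g^(2:ℕ))^(4:ℕ) + (1865306880)*(p^(2:ℕ))^(0:ℕ)*(q^(2:ℕ))^(4:ℕ)*(g^(2:ℕ))^(5:ℕ) + (7929840384)*(p^(2:ℕ))^(1:ℕ)*(q^(2:ℕ))^(3:ℕ)*(g^(2:ℕ))^(5:ℕ) + (11526084864)*(p^(2:ℕ))^(2:ℕ)*(q^(2:ℕ))^(2:ℕ)*(g^(2:ℕ))^(5:ℕ)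 + (6602943744)*(p^(2:ℕ))^(3:ℕ)*(q^(2:ℕ))^(1:ℕ)*(g^(2:ℕ))^(5:ℕ) + (1262324736)*(p^(2:ℕ))^(4:ℕ)*(q^(2:ℕ))^(0:ℕ)*(g^(2:ℕ))^(5:ℕ) + (1632586752)*(p^(2:ℕ))^(0:ℕ)*(q^(2:ℕ))^(3:ℕ)*(g^(2:ℕ))^(6:ℕ) + (4709643264)*(p^(2:ℕ))^(1:ℕ)*(q^(2:ℕ))^(2:ℕ)*(g^(2:ℕ))^(6:ℕ) + (3896709120)*(p^(2:ℕ))^(2:ℕ)*(q^(2:ℕ))^(1:ℕ)*(g^(2:ℕ))^(6:ℕ) + (940584960)*(p^(2:ℕ))^(3:ℕ)*(q^(2:ℕ))^(0:ℕ)*(g^(2:ℕ))^(6:ℕ) + (762545664)*(p^(2:ℕ))^(0:ℕ)*(q^(2:ℕ))^(2:ℕ)*(g^(2:ℕ))^(7:ℕ) + (1232838144)*(p^(2:ℕ))^(1:ℕ)*(q^(2:ℕ))^(1:ℕ)*(g^(2:ℕ))^(7:ℕ) + (409826304)*(p^(2:ℕ))^(2:ℕ)*(q^(2:ℕ))^(0:ℕ)*(g^(2:ℕ))^(7:ℕ)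 + (141087744)*(p^(2:ℕ))^(0:ℕ)*(q^(2:ℕ))^(1:ℕ)*(g^(2:ℕ))^(8:ℕ) + (80621568)*(p^(2:ℕ))^(1:ℕ)*(q^(2:ℕ))^(0:ℕ)*(g^(2:ℕ))^(8:ℕ) := by positivity
  have hAn : (0:ℝ) ≤ (79016)*(p^(2:ℕ))^(0:ℕ)*(q^(2:ℕ))^(10:ℕ)*(g^(2:ℕ))^(0:ℕ) := by positivity
  have hBn : (0:ℝ) ≤ (571592)*(p^(2:ℕ))^(10:ℕ)*(q^(2:ℕ))^(0:ℕ)*(g^(2:ℕ))^(0:ℕ) := by positivity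
  rcases le_or_gt (p^(2:ℕ)) 3 with hcase | hcase
  · have hq3 : (3:ℝ) ≤ q^(2:ℕ) := by linarith
    have hA : (0:ℝ) < (79016)*(p^(2:ℕ))^(0:ℕ)*(q^(2:ℕ))^(10:ℕ)*(g^(2:ℕ))^(0:ℕ) := by
      have e1 : (0:ℝ) < (q^(2:ℕ))^(10:ℕ) := pow_pos (by linarith) 10
      rw [pow_zero, pow_zero]
      nlinarith
    linarith
  · have hB : (0:ℝ) < (571592)*(p^(2:ℕ))^(10:ℕ)*(q^(2:ℕ))^(0:ℕ)*(g^(2:ℕ))^(0:ℕ) := by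
      have e1 : (0:ℝ) < (p^(2:ℕ))^(10:ℕ) := pow_pos (by linarith) 10
      rw [pow_zero, pow_zero]
      nlinarith
    linarith

lemma L2id (b c : ℝ) : (65536:ℝ) * (-(Ka b c)) =
    (4128768)*(b - 2)^(0:ℕ)*(4 * c - b ^ 2)^(1:ℕ) + ((1908736)*(b - 2)^(0:ℕ)*(4 * c - b ^ 2)^(2:ℕ) + (252928)*(b - 2)^(0:ℕ)*(4 * c - b ^ 2)^(3:ℕ) + (81152)*(b - 2)^(0:ℕ)*(4 * c - b ^ 2)^(4:ℕ) + (6592)*(b - 2)^(0:ℕ)*(4 * c - b ^ 2)^(5:ℕ) + (560)*(b - 2)^(0:ℕ)*(4 * c - b ^ 2)^(6:ℕ) + (20)*(b - 2)^(0:ℕ)*(4 * c - b ^ 2)^(7:ℕ) + (1)*(b - 2)^(0:ℕ)*(4 * c - b ^ 2)^(8:ℕ) + (6291456)*(b - 2)^(1:ℕ)*(4 * c - b ^ 2)^(0:ℕ) + (9076736)*(b - 2)^(1:ℕ)*(4 * c - b ^ 2)^(1:ℕ) + (6815744)*(b - 2)^(1:ℕ)*(4 * c - b ^ 2)^(2:ℕ)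 + (955392)*(b - 2)^(1:ℕ)*(4 * c - b ^ 2)^(3:ℕ) + (171520)*(b - 2)^(1:ℕ)*(4 * c - b ^ 2)^(4:ℕ) + (15680)*(b - 2)^(1:ℕ)*(4 * c - b ^ 2)^(5:ℕ) + (832)*(b - 2)^(1:ℕ)*(4 * c - b ^ 2)^(6:ℕ) + (36)*(b - 2)^(1:ℕ)*(4 * c - b ^ 2)^(7:ℕ) + (15925248)*(b - 2)^(2:ℕ)*(4 * c - b ^ 2)^(0:ℕ) + (13647872)*(b - 2)^(2:ℕ)*(4 * c - b ^ 2)^(1:ℕ) + (9720832)*(b - 2)^(2:ℕ)*(4 * c - b ^ 2)^(2:ℕ) + (1562624)*(b - 2)^(2:ℕ)*(4 * c - b ^ 2)^(3:ℕ) + (199616)*(b - 2)^(2:ℕ)*(4 * c - b ^ 2)^(4:ℕ) + (15328)*(b - 2)^(2:ℕ)*(4 * c - b ^ 2)^(5:ℕ) + (668)*(b - 2)^(2:ℕ)*(4 * c - b ^ 2)^(6:ℕ) + (8)*(b - 2)^(2:ℕ)*(4 * c - b ^ 2)^(7:ℕ) + (17465344)*(b - 2)^(3:ℕ)*(4 *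 c - b ^ 2)^(0:ℕ) + (18284544)*(b - 2)^(3:ℕ)*(4 * c - b ^ 2)^(1:ℕ) + (9026560)*(b - 2)^(3:ℕ)*(4 * c - b ^ 2)^(2:ℕ) + (1473536)*(b - 2)^(3:ℕ)*(4 * c - b ^ 2)^(3:ℕ) + (157760)*(b - 2)^(3:ℕ)*(4 * c - b ^ 2)^(4:ℕ) + (9024)*(b - 2)^(3:ℕ)*(4 * c - b ^ 2)^(5:ℕ) + (252)*(b - 2)^(3:ℕ)*(4 * c - b ^ 2)^(6:ℕ) + (11214848)*(b - 2)^(4:ℕ)*(4 * c - b ^ 2)^(0:ℕ) + (18027520)*(b - 2)^(4:ℕ)*(4 * c - b ^ 2)^(1:ℕ) + (6396416)*(b - 2)^(4:ℕ)*(4 * c - b ^ 2)^(2:ℕ) + (983424)*(b - 2)^(4:ℕ)*(4 * c - b ^ 2)^(3:ℕ) + (84368)*(b - 2)^(4:ℕ)*(4 * c - b ^ 2)^(4:ℕ) + (3588)*(b - 2)^(4:ℕ)*(4 * c - b ^ 2)^(5:ℕ) + (28)*(b - 2)^(4:ℕ)*(4 * c - b ^ 2)^(6:ℕ) + (6225920)*(b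 - 2)^(5:ℕ)*(4 * c - b ^ 2)^(0:ℕ) + (12827648)*(b - 2)^(5:ℕ)*(4 * c - b ^ 2)^(1:ℕ) + (3686400)*(b - 2)^(5:ℕ)*(4 * c - b ^ 2)^(2:ℕ) + (499840)*(b - 2)^(5:ℕ)*(4 * c - b ^ 2)^(3:ℕ) + (32640)*(b - 2)^(5:ℕ)*(4 * c - b ^ 2)^(4:ℕ) + (756)*(b - 2)^(5:ℕ)*(4 * c - b ^ 2)^(5:ℕ) + (4365312)*(b - 2)^(6:ℕ)*(4 * c - b ^ 2)^(0:ℕ) + (7118848)*(b - 2)^(6:ℕ)*(4 * c - b ^ 2)^(1:ℕ) + (1777536)*(b - 2)^(6:ℕ)*(4 * c - b ^ 2)^(2:ℕ) + (195392)*(b - 2)^(6:ℕ)*(4 * c - b ^ 2)^(3:ℕ) + (8620)*(b - 2)^(6:ℕ)*(4 * c - b ^ 2)^(4:ℕ) + (56)*(b - 2)^(6:ℕ)*(4 * c - b ^ 2)^(5:ℕ) + (3183616)*(b - 2)^(7:ℕ)*(4 * c - b ^ 2)^(0:ℕ) + (3343360)*(b - 2)^(7:ℕ)*(4 * c - b ^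 2)^(1:ℕ) + (709760)*(b - 2)^(7:ℕ)*(4 * c - b ^ 2)^(2:ℕ) + (56960)*(b - 2)^(7:ℕ)*(4 * c - b ^ 2)^(3:ℕ) + (1260)*(b - 2)^(7:ℕ)*(4 * c - b ^ 2)^(4:ℕ) + (1941760)*(b - 2)^(8:ℕ)*(4 * c - b ^ 2)^(0:ℕ) + (1370304)*(b - 2)^(8:ℕ)*(4 * c - b ^ 2)^(1:ℕ) + (224848)*(b - 2)^(8:ℕ)*(4 * c - b ^ 2)^(2:ℕ) + (11260)*(b - 2)^(8:ℕ)*(4 * c - b ^ 2)^(3:ℕ) + (70)*(b - 2)^(8:ℕ)*(4 * c - b ^ 2)^(4:ℕ) + (958976)*(b - 2)^(9:ℕ)*(4 * c - b ^ 2)^(0:ℕ) + (472640)*(b - 2)^(9:ℕ)*(4 * c - b ^ 2)^(1:ℕ) + (52800)*(b - 2)^(9:ℕ)*(4 * c - b ^ 2)^(2:ℕ) + (1260)*(b - 2)^(9:ℕ)*(4 * c - b ^ 2)^(3:ℕ) + (383168)*(b - 2)^(10:ℕ)*(4 * c - b ^ 2)^(0:ℕ) + (127712)*(b - 2)^(10:ℕ)*(4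 * c - b ^ 2)^(1:ℕ) + (8340)*(b - 2)^(10:ℕ)*(4 * c - b ^ 2)^(2:ℕ) + (56)*(b - 2)^(10:ℕ)*(4 * c - b ^ 2)^(3:ℕ) + (120640)*(b - 2)^(11:ℕ)*(4 * c - b ^ 2)^(0:ℕ) + (25152)*(b - 2)^(11:ℕ)*(4 * c - b ^ 2)^(1:ℕ) + (756)*(b - 2)^(11:ℕ)*(4 * c - b ^ 2)^(2:ℕ) + (28656)*(b - 2)^(12:ℕ)*(4 * c - b ^ 2)^(0:ℕ) + (3308)*(b - 2)^(12:ℕ)*(4 * c - b ^ 2)^(1:ℕ) + (28)*(b - 2)^(12:ℕ)*(4 * c - b ^ 2)^(2:ℕ) + (4864)*(b - 2)^(13:ℕ)*(4 * c - b ^ 2)^(0:ℕ) + (252)*(b - 2)^(13:ℕ)*(4 * c - b ^ 2)^(1:ℕ) + (548)*(b - 2)^(14:ℕ)*(4 * c - b ^ 2)^(0:ℕ) + (8)*(b - 2)^(14:ℕ)*(4 * c - b ^ 2)^(1:ℕ) + (36)*(b - 2)^(15:ℕ)*(4 * c - b ^ 2)^(0:ℕ) + (1)*(b - 2)^(16:ℕ)*(4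 * c - b ^ 2)^(0:ℕ)) := by
  simp only [Ka]; ring

lemma L1aid (b c : ℝ) : (262144:ℝ) * (Sa b c) =
    (20713570304)*(-4 - b)^(0:ℕ)*(4 * c - b ^ 2)^(0:ℕ) + ((32210026496)*(-4 - b)^(0:ℕ)*(4 * c - b ^ 2)^(1:ℕ) + (14545813504)*(-4 - b)^(0:ℕ)*(4 * c - b ^ 2)^(2:ℕ) + (1736376320)*(-4 - b)^(0:ℕ)*(4 * c - b ^ 2)^(3:ℕ) + (164663296)*(-4 - b)^(0:ℕ)*(4 * c - b ^ 2)^(4:ℕ) + (10234880)*(-4 - b)^(0:ℕ)*(4 * c - b ^ 2)^(5:ℕ) + (373248)*(-4 - b)^(0:ℕ)*(4 * c - b ^ 2)^(6:ℕ) + (7264)*(-4 - b)^(0:ℕ)*(4 * c - b ^ 2)^(7:ℕ) + (56)*(-4 - b)^(0:ℕ)*(4 * c - b ^ 2)^(8:ℕ) + (225381974016)*(-4 - b)^(1:ℕ)*(4 * c - b ^ 2)^(0:ℕ) + (171341316096)*(-4 - b)^(1:ℕ)*(4 * c - b ^ 2)^(1:ℕ) + (45511819264)*(-4 - b)^(1:ℕ)*(4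 * c - b ^ 2)^(2:ℕ) + (5207195648)*(-4 - b)^(1:ℕ)*(4 * c - b ^ 2)^(3:ℕ) + (391948288)*(-4 - b)^(1:ℕ)*(4 * c - b ^ 2)^(4:ℕ) + (17487360)*(-4 - b)^(1:ℕ)*(4 * c - b ^ 2)^(5:ℕ) + (413952)*(-4 - b)^(1:ℕ)*(4 * c - b ^ 2)^(6:ℕ) + (4048)*(-4 - b)^(1:ℕ)*(4 * c - b ^ 2)^(7:ℕ) + (4)*(-4 - b)^(1:ℕ)*(4 * c - b ^ 2)^(8:ℕ) + (636992487424)*(-4 - b)^(2:ℕ)*(4 * c - b ^ 2)^(0:ℕ) + (347519057920)*(-4 - b)^(2:ℕ)*(4 * c - b ^ 2)^(1:ℕ) + (68788387840)*(-4 - b)^(2:ℕ)*(4 * c - b ^ 2)^(2:ℕ) + (6773276672)*(-4 - b)^(2:ℕ)*(4 * c - b ^ 2)^(3:ℕ) + (391070720)*(-4 - b)^(2:ℕ)*(4 * c - b ^ 2)^(4:ℕ) + (12183040)*(-4 - b)^(2:ℕ)*(4 * c - b ^ 2)^(5:ℕ) + (173216)*(-4 - b)^(2:ℕ)*(4 *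 c - b ^ 2)^(6:ℕ) + (688)*(-4 - b)^(2:ℕ)*(4 * c - b ^ 2)^(7:ℕ) + (949280374784)*(-4 - b)^(3:ℕ)*(4 * c - b ^ 2)^(0:ℕ) + (404033273856)*(-4 - b)^(3:ℕ)*(4 * c - b ^ 2)^(1:ℕ) + (63847792640)*(-4 - b)^(3:ℕ)*(4 * c - b ^ 2)^(2:ℕ) + (5100621824)*(-4 - b)^(3:ℕ)*(4 * c - b ^ 2)^(3:ℕ) + (218468864)*(-4 - b)^(3:ℕ)*(4 * c - b ^ 2)^(4:ℕ) + (4525568)*(-4 - b)^(3:ℕ)*(4 * c - b ^ 2)^(5:ℕ) + (34480)*(-4 - b)^(3:ℕ)*(4 * c - b ^ 2)^(6:ℕ) + (32)*(-4 - b)^(3:ℕ)*(4 * c - b ^ 2)^(7:ℕ) + (914955993088)*(-4 - b)^(4:ℕ)*(4 * c - b ^ 2)^(0:ℕ) + (313010290688)*(-4 - b)^(4:ℕ)*(4 * c - b ^ 2)^(1:ℕ) + (39940759552)*(-4 - b)^(4:ℕ)*(4 * c - b ^ 2)^(2:ℕ) + (2488199168)*(-4 - b)^(4:ℕ)*(4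 * c - b ^ 2)^(3:ℕ) + (76011520)*(-4 - b)^(4:ℕ)*(4 * c - b ^ 2)^(4:ℕ) + (974304)*(-4 - b)^(4:ℕ)*(4 * c - b ^ 2)^(5:ℕ) + (3248)*(-4 - b)^(4:ℕ)*(4 * c - b ^ 2)^(6:ℕ) + (626724126720)*(-4 - b)^(5:ℕ)*(4 * c - b ^ 2)^(0:ℕ) + (173802881024)*(-4 - b)^(5:ℕ)*(4 * c - b ^ 2)^(1:ℕ) + (17701830656)*(-4 - b)^(5:ℕ)*(4 * c - b ^ 2)^(2:ℕ) + (829705216)*(-4 - b)^(5:ℕ)*(4 * c - b ^ 2)^(3:ℕ) + (17174272)*(-4 - b)^(5:ℕ)*(4 * c - b ^ 2)^(4:ℕ) + (121872)*(-4 - b)^(5:ℕ)*(4 * c - b ^ 2)^(5:ℕ) + (112)*(-4 - b)^(5:ℕ)*(4 * c - b ^ 2)^(6:ℕ) + (321262813184)*(-4 - b)^(6:ℕ)*(4 * c - b ^ 2)^(0:ℕ) + (71946698752)*(-4 - b)^(6:ℕ)*(4 * c - b ^ 2)^(1:ℕ) + (5718693888)*(-4 - b)^(6:ℕ)*(4 *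 c - b ^ 2)^(2:ℕ) + (193670144)*(-4 - b)^(6:ℕ)*(4 * c - b ^ 2)^(3:ℕ) + (2527520)*(-4 - b)^(6:ℕ)*(4 * c - b ^ 2)^(4:ℕ) + (8176)*(-4 - b)^(6:ℕ)*(4 * c - b ^ 2)^(5:ℕ) + (127033212928)*(-4 - b)^(7:ℕ)*(4 * c - b ^ 2)^(0:ℕ) + (22685069312)*(-4 - b)^(7:ℕ)*(4 * c - b ^ 2)^(1:ℕ) + (1365251072)*(-4 - b)^(7:ℕ)*(4 * c - b ^ 2)^(2:ℕ) + (31720448)*(-4 - b)^(7:ℕ)*(4 * c - b ^ 2)^(3:ℕ) + (233840)*(-4 - b)^(7:ℕ)*(4 * c - b ^ 2)^(4:ℕ) + (224)*(-4 - b)^(7:ℕ)*(4 * c - b ^ 2)^(5:ℕ) + (39435063296)*(-4 - b)^(8:ℕ)*(4 * c - b ^ 2)^(0:ℕ) + (5502610432)*(-4 - b)^(8:ℕ)*(4 * c - b ^ 2)^(1:ℕ) + (241172992)*(-4 - b)^(8:ℕ)*(4 * c - b ^ 2)^(2:ℕ) + (3577120)*(-4 - b)^(8:ℕ)*(4 *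 c - b ^ 2)^(3:ℕ) + (12320)*(-4 - b)^(8:ℕ)*(4 * c - b ^ 2)^(4:ℕ) + (9695582208)*(-4 - b)^(9:ℕ)*(4 * c - b ^ 2)^(0:ℕ) + (1027825152)*(-4 - b)^(9:ℕ)*(4 * c - b ^ 2)^(1:ℕ) + (31162112)*(-4 - b)^(9:ℕ)*(4 * c - b ^ 2)^(2:ℕ) + (264560)*(-4 - b)^(9:ℕ)*(4 * c - b ^ 2)^(3:ℕ) + (280)*(-4 - b)^(9:ℕ)*(4 * c - b ^ 2)^(4:ℕ) + (1891279872)*(-4 - b)^(10:ℕ)*(4 * c - b ^ 2)^(0:ℕ) + (146705920)*(-4 - b)^(10:ℕ)*(4 * c - b ^ 2)^(1:ℕ) + (2863584)*(-4 - b)^(10:ℕ)*(4 * c - b ^ 2)^(2:ℕ) + (11536)*(-4 - b)^(10:ℕ)*(4 * c - b ^ 2)^(3:ℕ) + (291297792)*(-4 - b)^(11:ℕ)*(4 * c - b ^ 2)^(0:ℕ) + (15715840)*(-4 - b)^(11:ℕ)*(4 * c - b ^ 2)^(1:ℕ) + (177168)*(-4 - b)^(11:ℕ)*(4 * c - b ^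 2)^(2:ℕ) + (224)*(-4 - b)^(11:ℕ)*(4 * c - b ^ 2)^(3:ℕ) + (35001344)*(-4 - b)^(12:ℕ)*(4 * c - b ^ 2)^(0:ℕ) + (1222816)*(-4 - b)^(12:ℕ)*(4 * c - b ^ 2)^(1:ℕ) + (6608)*(-4 - b)^(12:ℕ)*(4 * c - b ^ 2)^(2:ℕ) + (3211520)*(-4 - b)^(13:ℕ)*(4 * c - b ^ 2)^(0:ℕ) + (65200)*(-4 - b)^(13:ℕ)*(4 * c - b ^ 2)^(1:ℕ) + (112)*(-4 - b)^(13:ℕ)*(4 * c - b ^ 2)^(2:ℕ) + (217184)*(-4 - b)^(14:ℕ)*(4 * c - b ^ 2)^(0:ℕ) + (2128)*(-4 - b)^(14:ℕ)*(4 * c - b ^ 2)^(1:ℕ) + (10192)*(-4 - b)^(15:ℕ)*(4 * c - b ^ 2)^(0:ℕ) + (32)*(-4 - b)^(15:ℕ)*(4 * c - b ^ 2)^(1:ℕ) + (296)*(-4 - b)^(16:ℕ)*(4 * c - b ^ 2)^(0:ℕ) + (4)*(-4 - b)^(17:ℕ)*(4 * c - b ^ 2)^(0:ℕ)) := by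
  simp only [Sa]; ring

lemma Kpairid (s t : ℝ) : (1:ℝ) * (-(Ka (s + t) (s * t))) =
    (46944)*(s - 2)^(0:ℕ)*(t - 2)^(0:ℕ) + ((182418)*(s - 2)^(0:ℕ)*(t - 2)^(1:ℕ) + (307302)*(s - 2)^(0:ℕ)*(t - 2)^(2:ℕ) + (294656)*(s - 2)^(0:ℕ)*(t - 2)^(3:ℕ) + (177376)*(s - 2)^(0:ℕ)*(t - 2)^(4:ℕ) + (69152)*(s - 2)^(0:ℕ)*(t - 2)^(5:ℕ) + (17152)*(s - 2)^(0:ℕ)*(t - 2)^(6:ℕ) + (2486)*(s - 2)^(0:ℕ)*(t - 2)^(7:ℕ) + (162)*(s - 2)^(0:ℕ)*(t - 2)^(8:ℕ) + (182418)*(s - 2)^(1:ℕ)*(t - 2)^(0:ℕ) + (773079)*(s - 2)^(1:ℕ)*(t - 2)^(1:ℕ) + (1389083)*(s - 2)^(1:ℕ)*(t - 2)^(2:ℕ) + (1400704)*(s - 2)^(1:ℕ)*(t - 2)^(3:ℕ) + (878384)*(s - 2)^(1:ℕ)*(t - 2)^(4:ℕ) + (353872)*(s - 2)^(1:ℕ)*(t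 - 2)^(5:ℕ) + (89990)*(s - 2)^(1:ℕ)*(t - 2)^(6:ℕ) + (13269)*(s - 2)^(1:ℕ)*(t - 2)^(7:ℕ) + (873)*(s - 2)^(1:ℕ)*(t - 2)^(8:ℕ) + (307302)*(s - 2)^(2:ℕ)*(t - 2)^(0:ℕ) + (1389083)*(s - 2)^(2:ℕ)*(t - 2)^(1:ℕ) + (2604457)*(s - 2)^(2:ℕ)*(t - 2)^(2:ℕ) + (2708502)*(s - 2)^(2:ℕ)*(t - 2)^(3:ℕ) + (1738518)*(s - 2)^(2:ℕ)*(t - 2)^(4:ℕ) + (712314)*(s - 2)^(2:ℕ)*(t - 2)^(5:ℕ) + (183116)*(s - 2)^(2:ℕ)*(t - 2)^(6:ℕ) + (27139)*(s - 2)^(2:ℕ)*(t - 2)^(7:ℕ) + (1785)*(s - 2)^(2:ℕ)*(t - 2)^(8:ℕ) + (294656)*(s - 2)^(3:ℕ)*(t - 2)^(0:ℕ) + (1400704)*(s - 2)^(3:ℕ)*(t - 2)^(1:ℕ) + (2708502)*(s - 2)^(3:ℕ)*(t - 2)^(2:ℕ) + (2877144)*(s - 2)^(3:ℕ)*(t -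 2)^(3:ℕ) + (1874412)*(s - 2)^(3:ℕ)*(t - 2)^(4:ℕ) + (775160)*(s - 2)^(3:ℕ)*(t - 2)^(5:ℕ) + (200080)*(s - 2)^(3:ℕ)*(t - 2)^(6:ℕ) + (29628)*(s - 2)^(3:ℕ)*(t - 2)^(7:ℕ) + (1938)*(s - 2)^(3:ℕ)*(t - 2)^(8:ℕ) + (177376)*(s - 2)^(4:ℕ)*(t - 2)^(0:ℕ) + (878384)*(s - 2)^(4:ℕ)*(t - 2)^(1:ℕ) + (1738518)*(s - 2)^(4:ℕ)*(t - 2)^(2:ℕ) + (1874412)*(s - 2)^(4:ℕ)*(t - 2)^(3:ℕ) + (1232216)*(s - 2)^(4:ℕ)*(t - 2)^(4:ℕ) + (511536)*(s - 2)^(4:ℕ)*(t - 2)^(5:ℕ) + (131900)*(s - 2)^(4:ℕ)*(t - 2)^(6:ℕ) + (19424)*(s - 2)^(4:ℕ)*(t - 2)^(7:ℕ) + (1258)*(s - 2)^(4:ℕ)*(t - 2)^(8:ℕ) + (69152)*(s - 2)^(5:ℕ)*(t - 2)^(0:ℕ) + (353872)*(s - 2)^(5:ℕ)*(t - 2)^(1:ℕ)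 + (712314)*(s - 2)^(5:ℕ)*(t - 2)^(2:ℕ) + (775160)*(s - 2)^(5:ℕ)*(t - 2)^(3:ℕ) + (511536)*(s - 2)^(5:ℕ)*(t - 2)^(4:ℕ) + (212124)*(s - 2)^(5:ℕ)*(t - 2)^(5:ℕ) + (54384)*(s - 2)^(5:ℕ)*(t - 2)^(6:ℕ) + (7928)*(s - 2)^(5:ℕ)*(t - 2)^(7:ℕ) + (506)*(s - 2)^(5:ℕ)*(t - 2)^(8:ℕ) + (17152)*(s - 2)^(6:ℕ)*(t - 2)^(0:ℕ) + (89990)*(s - 2)^(6:ℕ)*(t - 2)^(1:ℕ) + (183116)*(s - 2)^(6:ℕ)*(t - 2)^(2:ℕ) + (200080)*(s - 2)^(6:ℕ)*(t - 2)^(3:ℕ) + (131900)*(s - 2)^(6:ℕ)*(t - 2)^(4:ℕ) + (54384)*(s - 2)^(6:ℕ)*(t - 2)^(5:ℕ) + (13800)*(s - 2)^(6:ℕ)*(t - 2)^(6:ℕ) + (1982)*(s - 2)^(6:ℕ)*(t - 2)^(7:ℕ) + (124)*(s - 2)^(6:ℕ)*(t - 2)^(8:ℕ) + (2486)*(s -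 2)^(7:ℕ)*(t - 2)^(0:ℕ) + (13269)*(s - 2)^(7:ℕ)*(t - 2)^(1:ℕ) + (27139)*(s - 2)^(7:ℕ)*(t - 2)^(2:ℕ) + (29628)*(s - 2)^(7:ℕ)*(t - 2)^(3:ℕ) + (19424)*(s - 2)^(7:ℕ)*(t - 2)^(4:ℕ) + (7928)*(s - 2)^(7:ℕ)*(t - 2)^(5:ℕ) + (1982)*(s - 2)^(7:ℕ)*(t - 2)^(6:ℕ) + (279)*(s - 2)^(7:ℕ)*(t - 2)^(7:ℕ) + (17)*(s - 2)^(7:ℕ)*(t - 2)^(8:ℕ) + (162)*(s - 2)^(8:ℕ)*(t - 2)^(0:ℕ) + (873)*(s - 2)^(8:ℕ)*(t - 2)^(1:ℕ) + (1785)*(s - 2)^(8:ℕ)*(t - 2)^(2:ℕ) + (1938)*(s - 2)^(8:ℕ)*(t - 2)^(3:ℕ) + (1258)*(s - 2)^(8:ℕ)*(t - 2)^(4:ℕ) + (506)*(s - 2)^(8:ℕ)*(t - 2)^(5:ℕ) + (124)*(s - 2)^(8:ℕ)*(t - 2)^(6:ℕ) + (17)*(s - 2)^(8:ℕ)*(t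 - 2)^(7:ℕ) + (1)*(s - 2)^(8:ℕ)*(t - 2)^(8:ℕ)) := by
  simp only [Ka]; ring

lemma L1bid (b c : ℝ) : (60466176:ℝ) * (Sa b c) =
    (79016)*(b + 4)^(0:ℕ)*(2 - b)^(10:ℕ)*(c - 4)^(0:ℕ) + ((571592)*(b + 4)^(10:ℕ)*(2 - b)^(0:ℕ)*(c - 4)^(0:ℕ) + ((1529408)*(b + 4)^(1:ℕ)*(2 - b)^(9:ℕ)*(c - 4)^(0:ℕ) + (32866056)*(b + 4)^(2:ℕ)*(2 - b)^(8:ℕ)*(c - 4)^(0:ℕ) + (7855008)*(b + 4)^(3:ℕ)*(2 - b)^(7:ℕ)*(c - 4)^(0:ℕ) + (14663472)*(b + 4)^(4:ℕ)*(2 - b)^(6:ℕ)*(c - 4)^(0:ℕ) + (140351904)*(b + 4)^(5:ℕ)*(2 - b)^(5:ℕ)*(c - 4)^(0:ℕ) + (175228080)*(b + 4)^(6:ℕ)*(2 - b)^(4:ℕ)*(c - 4)^(0:ℕ) + (101142240)*(b + 4)^(7:ℕ)*(2 - b)^(3:ℕ)*(c - 4)^(0:ℕ) + (34164648)*(b +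 4)^(8:ℕ)*(2 - b)^(2:ℕ)*(c - 4)^(0:ℕ) + (6694304)*(b + 4)^(9:ℕ)*(2 - b)^(1:ℕ)*(c - 4)^(0:ℕ) + (17693496)*(b + 4)^(0:ℕ)*(2 - b)^(8:ℕ)*(c - 4)^(1:ℕ) + (343888776)*(b + 4)^(1:ℕ)*(2 - b)^(7:ℕ)*(c - 4)^(1:ℕ) + (401410152)*(b + 4)^(2:ℕ)*(2 - b)^(6:ℕ)*(c - 4)^(1:ℕ) + (1126309896)*(b + 4)^(3:ℕ)*(2 - b)^(5:ℕ)*(c - 4)^(1:ℕ) + (3239918424)*(b + 4)^(4:ℕ)*(2 - b)^(4:ℕ)*(c - 4)^(1:ℕ) + (3209990616)*(b + 4)^(5:ℕ)*(2 - b)^(3:ℕ)*(c - 4)^(1:ℕ) + (1550633400)*(b + 4)^(6:ℕ)*(2 - b)^(2:ℕ)*(c - 4)^(1:ℕ) + (387933336)*(b + 4)^(7:ℕ)*(2 - b)^(1:ℕ)*(c - 4)^(1:ℕ) + (39865680)*(b + 4)^(8:ℕ)*(2 - b)^(0:ℕ)*(c - 4)^(1:ℕ) + (191766096)*(b + 4)^(0:ℕ)*(2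 - b)^(7:ℕ)*(c - 4)^(2:ℕ) + (1038708576)*(b + 4)^(1:ℕ)*(2 - b)^(6:ℕ)*(c - 4)^(2:ℕ) + (3077148528)*(b + 4)^(2:ℕ)*(2 - b)^(5:ℕ)*(c - 4)^(2:ℕ) + (7710667776)*(b + 4)^(3:ℕ)*(2 - b)^(4:ℕ)*(c - 4)^(2:ℕ) + (9661846320)*(b + 4)^(4:ℕ)*(2 - b)^(3:ℕ)*(c - 4)^(2:ℕ) + (5910089184)*(b + 4)^(5:ℕ)*(2 - b)^(2:ℕ)*(c - 4)^(2:ℕ) + (1750423824)*(b + 4)^(6:ℕ)*(2 - b)^(1:ℕ)*(c - 4)^(2:ℕ) + (203117760)*(b + 4)^(7:ℕ)*(2 - b)^(0:ℕ)*(c - 4)^(2:ℕ) + (549400320)*(b + 4)^(0:ℕ)*(2 - b)^(6:ℕ)*(c - 4)^(3:ℕ) + (3414161664)*(b + 4)^(1:ℕ)*(2 - b)^(5:ℕ)*(c - 4)^(3:ℕ) + (10226310912)*(b + 4)^(2:ℕ)*(2 - b)^(4:ℕ)*(c - 4)^(3:ℕ) + (15974879616)*(b + 4)^(3:ℕ)*(2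 - b)^(3:ℕ)*(c - 4)^(3:ℕ) + (12307821696)*(b + 4)^(4:ℕ)*(2 - b)^(2:ℕ)*(c - 4)^(3:ℕ) + (4406348160)*(b + 4)^(5:ℕ)*(2 - b)^(1:ℕ)*(c - 4)^(3:ℕ) + (590924160)*(b + 4)^(6:ℕ)*(2 - b)^(0:ℕ)*(c - 4)^(3:ℕ) + (1250411904)*(b + 4)^(0:ℕ)*(2 - b)^(5:ℕ)*(c - 4)^(4:ℕ) + (7046984448)*(b + 4)^(1:ℕ)*(2 - b)^(4:ℕ)*(c - 4)^(4:ℕ) + (15333898752)*(b + 4)^(2:ℕ)*(2 - b)^(3:ℕ)*(c - 4)^(4:ℕ) + (15382420992)*(b + 4)^(3:ℕ)*(2 - b)^(2:ℕ)*(c - 4)^(4:ℕ) + (6799800960)*(b + 4)^(4:ℕ)*(2 - b)^(1:ℕ)*(c - 4)^(4:ℕ) + (1075638528)*(b + 4)^(5:ℕ)*(2 - b)^(0:ℕ)*(c - 4)^(4:ℕ) + (1865306880)*(b + 4)^(0:ℕ)*(2 - b)^(4:ℕ)*(c - 4)^(5:ℕ) + (7929840384)*(b + 4)^(1:ℕ)*(2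 - b)^(3:ℕ)*(c - 4)^(5:ℕ) + (11526084864)*(b + 4)^(2:ℕ)*(2 - b)^(2:ℕ)*(c - 4)^(5:ℕ) + (6602943744)*(b + 4)^(3:ℕ)*(2 - b)^(1:ℕ)*(c - 4)^(5:ℕ) + (1262324736)*(b + 4)^(4:ℕ)*(2 - b)^(0:ℕ)*(c - 4)^(5:ℕ) + (1632586752)*(b + 4)^(0:ℕ)*(2 - b)^(3:ℕ)*(c - 4)^(6:ℕ) + (4709643264)*(b + 4)^(1:ℕ)*(2 - b)^(2:ℕ)*(c - 4)^(6:ℕ) + (3896709120)*(b + 4)^(2:ℕ)*(2 - b)^(1:ℕ)*(c - 4)^(6:ℕ) + (940584960)*(b + 4)^(3:ℕ)*(2 - b)^(0:ℕ)*(c - 4)^(6:ℕ) + (762545664)*(b + 4)^(0:ℕ)*(2 - b)^(2:ℕ)*(c - 4)^(7:ℕ) + (1232838144)*(b + 4)^(1:ℕ)*(2 - b)^(1:ℕ)*(c - 4)^(7:ℕ) + (409826304)*(b + 4)^(2:ℕ)*(2 - b)^(0:ℕ)*(c - 4)^(7:ℕ) + (141087744)*(b + 4)^(0:ℕ)*(2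 - b)^(1:ℕ)*(c - 4)^(8:ℕ) + (80621568)*(b + 4)^(1:ℕ)*(2 - b)^(0:ℕ)*(c - 4)^(8:ℕ))) := by
  simp only [Sa]; ring

lemma L2' (b c : ℝ) (hb : 2 ≤ b) (hbc : b^2 < 4*c) : Ka b c < 0 := by
  have hA : (0:ℝ) ≤ b - 2 := by linarith
  have hU : (0:ℝ) ≤ 4 * c - b ^ 2 := by nlinarith
  have h := L2aux (Real.sqrt (b - 2)) (Real.sqrt (4 * c - b ^ 2))
    (by rw [Real.sq_sqrt hU]; nlinarith)
  rw [Real.sq_sqrt hA, Real.sq_sqrt hU, ← L2id b c] at h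
  linarith

lemma L1a' (b c : ℝ) (hb : b ≤ -4) (hbc : b^2 < 4*c) : 0 < Sa b c := by
  have hA : (0:ℝ) ≤ -4 - b := by linarith
  have hU : (0:ℝ) ≤ 4 * c - b ^ 2 := by nlinarith
  have h := L1aaux (Real.sqrt (-4 - b)) (Real.sqrt (4 * c - b ^ 2))
  rw [Real.sq_sqrt hA, Real.sq_sqrt hU, ← L1aid b c] at h
  linarith

lemma Kpair' (s t : ℝ) (hs : 2 ≤ s) (ht : 2 ≤ t) : Ka (s + t) (s * t) < 0 := by
  have hA : (0:ℝ) ≤ s - 2 := by linarith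
  have hU : (0:ℝ) ≤ t - 2 := by linarith
  have h := Kpairaux (Real.sqrt (s - 2)) (Real.sqrt (t - 2))
  rw [Real.sq_sqrt hA, Real.sq_sqrt hU, ← Kpairid s t] at h
  linarith

lemma L1b' (b c : ℝ) (hb1 : -4 ≤ b) (hb2 : b ≤ 2) (hc : 4 ≤ c) : 0 < Sa b c := by
  have hP : (0:ℝ) ≤ b + 4 := by linarith
  have hQ : (0:ℝ) ≤ 2 - b := by linarith
  have hG : (0:ℝ) ≤ c - 4 := by linarith
  have h := L1baux (Real.sqrt (b + 4)) (Real.sqrt (2 - b)) (Real.sqrt (c - 4))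
    (by rw [Real.sq_sqrt hP, Real.sq_sqrt hQ]; ring)
  rw [Real.sq_sqrt hP, Real.sq_sqrt hQ, Real.sq_sqrt hG, ← L1bid b c] at h
  linarith

/-- `P` is negative on `(-∞, -2]`. -/
lemma Pa_neg (s : ℝ) (hs : s ≤ -2) : Pa s < 0 := by
  have he : (0:ℝ) ≤ -2 - s := by linarith
  have hid : -(Pa s) = 2808 + 9756*(-2-s)^1 + 15495*(-2-s)^2 + 14667*(-2-s)^3
      + 9080*(-2-s)^4 + 3800*(-2-s)^5 + 1072*(-2-s)^6 + 196*(-2-s)^7 + 21*(-2-s)^8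
      + (-2-s)^9 := by
    simp only [Pa]; ring
  nlinarith [pow_nonneg he 1, pow_nonneg he 2, pow_nonneg he 3, pow_nonneg he 4,
    pow_nonneg he 5, pow_nonneg he 6, pow_nonneg he 7, pow_nonneg he 8, pow_nonneg he 9]

/-- `Q` is nonpositive on `(-∞, -2]`. -/
lemma Qa_nonpos_neg (s : ℝ) (hs : s ≤ -2) : Qa s ≤ 0 := by
  have he : (0:ℝ) ≤ -2 - s := by linarith
  have hid : -(Qa s) = 14 + 255*(-2-s)^1 + 737*(-2-s)^2 + 974*(-2-s)^3 + 738*(-2-s)^4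
      + 342*(-2-s)^5 + 96*(-2-s)^6 + 15*(-2-s)^7 + (-2-s)^8 := by
    simp only [Qa]; ring
  nlinarith [pow_nonneg he 1, pow_nonneg he 2, pow_nonneg he 3, pow_nonneg he 4,
    pow_nonneg he 5, pow_nonneg he 6, pow_nonneg he 7, pow_nonneg he 8]

/-- `Q` is negative on `[2, ∞)`. -/
lemma Qa_neg_pos (s : ℝ) (hs : 2 ≤ s) : Qa s < 0 := by
  have he : (0:ℝ) ≤ s - 2 := by linarith
  have hid : -(Qa s) = 162 + 873*(s-2)^1 + 1785*(s-2)^2 + 1938*(s-2)^3 + 1258*(s-2)^4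
      + 506*(s-2)^5 + 124*(s-2)^6 + 17*(s-2)^7 + (s-2)^8 := by
    simp only [Qa]; ring
  nlinarith [pow_nonneg he 1, pow_nonneg he 2, pow_nonneg he 3, pow_nonneg he 4,
    pow_nonneg he 5, pow_nonneg he 6, pow_nonneg he 7, pow_nonneg he 8]

/-- value of `D_n` at `n+5` is positive. -/
lemma Dtop (n : ℕ) : 0 < Pa ((n:ℝ)+5) + (n:ℝ) * Qa ((n:ℝ)+5) := by
  have hid : Pa ((n:ℝ)+5) + (n:ℝ) * Qa ((n:ℝ)+5)
      = 990016 + 1519740*(n:ℝ) + 1006718*(n:ℝ)^2 + 375249*(n:ℝ)^3 + 85855*(n:ℝ)^4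
        + 12295*(n:ℝ)^5 + 1069*(n:ℝ)^6 + 51*(n:ℝ)^7 + (n:ℝ)^8 := by
    simp only [Pa, Qa]; ring
  rw [hid]
  positivity

/-- the real function `d_n`. -/
lemma Dreal_cont (n : ℕ) : Continuous (fun s : ℝ => Pa s + (n:ℝ) * Qa s) := by
  simp only [Pa, Qa]
  fun_prop

/-- uniqueness of real roots `> 2`. -/
lemma realroot_unique (n : ℕ) (s t : ℝ) (hs : 2 < s) (ht : 2 < t)
    (hds : Pa s + (n:ℝ) * Qa s = 0) (hdt : Pa t + (n:ℝ) * Qa t = 0) : s = t := by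
  by_contra hne
  have h1 : Pa s = -((n:ℝ) * Qa s) := by linarith
  have h2 : Pa t = -((n:ℝ) * Qa t) := by linarith
  have e1 : Pa s * Qa t - Pa t * Qa s = 0 := by rw [h1, h2]; ring
  have e2 : Pa s * Qa t - Pa t * Qa s = (s - t) * Ka (s+t) (s*t) := by
    simp only [Pa, Qa, Ka]; ring
  have hK : Ka (s+t) (s*t) < 0 := Kpair' s t hs.le ht.le
  have hst : s - t ≠ 0 := sub_ne_zero_of_ne hne
  have := e2 ▸ e1
  rcases mul_eq_zero.mp this with h | h
  · exact hst h
  · exact hK.ne h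

end Stmt7Aux

open Stmt7Aux in
theorem stmt_7 (n : ℕ) (hn : 0 < n) :
    ∃ τ : ℝ, 2 < τ ∧ (DpolyC n).IsRoot (τ : ℂ) ∧
      (∀ s : ℝ, 2 < s → (DpolyC n).IsRoot (s : ℂ) → s = τ) ∧
      ∀ z : ℂ, (DpolyC n).IsRoot z → z ≠ (τ : ℂ) → ‖z‖ < 2 := by
  have hn1 : (1:ℝ) ≤ (n:ℝ) := by exact_mod_cast hn
  -- the real root function
  set d : ℝ → ℝ := fun s => Pa s + (n:ℝ) * Qa s with hd
  -- real root criterion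
  have hroot_iff : ∀ x : ℝ, (DpolyC n).IsRoot (x : ℂ) ↔ d x = 0 := by
    intro x
    rw [IsRoot, eval_D]
    have key : ((d x : ℝ) : ℂ) = Pa (x:ℂ) + (n:ℂ) * Qa (x:ℂ) := by
      simp only [hd]
      push_cast
      rw [Pa_cast, Qa_cast]
      try push_cast
      try ring
    rw [← key, Complex.ofReal_eq_zero]
  -- d 2 < 0
  have hd2 : d 2 < 0 := by
    have : d 2 = -56 - 162*(n:ℝ) := by simp only [hd, Pa, Qa]; ring
    rw [this]; linarith
  -- d (n+5) > 0
  have hdtop : 0 < d ((n:ℝ)+5) := Dtop n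
  -- IVT
  have h25 : (2:ℝ) ≤ (n:ℝ)+5 := by linarith
  have hIVT := intermediate_value_Ioo h25 ((Dreal_cont n).continuousOn)
  have h0mem : (0:ℝ) ∈ Set.Ioo (d 2) (d ((n:ℝ)+5)) := ⟨hd2, hdtop⟩
  obtain ⟨τ, hτmem, hτeq⟩ := hIVT h0mem
  have hτ2 : 2 < τ := hτmem.1
  have hτroot : (DpolyC n).IsRoot (τ : ℂ) := (hroot_iff τ).mpr hτeq
  refine ⟨τ, hτ2, hτroot, ?_, ?_⟩
  · intro s hs hrs
    exact realroot_unique n s τ hs hτ2 ((hroot_iff s).mp hrs) hτeq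
  · intro z hz hzτ
    by_contra habs
    push_neg at habs
    rcases eq_or_ne z.im 0 with him | him
    · -- real case
      have hzx : z = (z.re : ℂ) := by
        apply Complex.ext
        · simp
        · simp [him]
      set x := z.re with hx
      rw [hzx] at hz
      have hdx : d x = 0 := (hroot_iff x).mp hz
      have habs' : 2 ≤ |x| := by
        rw [hzx] at habs
        simpa [Complex.norm_real, Real.norm_eq_abs] using habs
      rcases le_abs.mp habs' with hx2 | hx2
      · -- x ≥ 2
        have hxne2 : x ≠ 2 := by
          intro h
          rw [h] at hdx
          have : d 2 = 0 := hdx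
          linarith
        have hx2' : 2 < x := lt_of_le_of_ne hx2 (Ne.symm hxne2)
        have : x = τ := realroot_unique n x τ hx2' hτ2 hdx hτeq
        exact hzτ (by rw [hzx, this])
      · -- x ≤ -2
        have hxle : x ≤ -2 := by linarith
        have h1 := Pa_neg x hxle
        have h2 := Qa_nonpos_neg x hxle
        have h3 : (n:ℝ) * Qa x ≤ 0 := mul_nonpos_of_nonneg_of_nonpos (by positivity) h2
        have : d x < 0 := by simp only [hd]; linarith
        linarith [hdx ▸ this]
    · -- non-real case
      set w := (starRingEnd ℂ) z with hw
      have h1 : Pa z + (n:ℂ) * Qa z = 0 := by rw [← eval_D]; exact hz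
      have h2 : Pa w + (n:ℂ) * Qa w = 0 := by
        have := congrArg (starRingEnd ℂ) h1
        simpa [hw, Pa_conj, Qa_conj, map_add, map_mul] using this
      set br : ℝ := 2 * z.re with hbr
      set cr : ℝ := Complex.normSq z with hcr
      have hsum : z + w = (br : ℂ) := by
        rw [hw, Complex.add_conj, hbr]
        try push_cast
        try ring
      have hprod : z * w = (cr : ℂ) := by rw [hw, Complex.mul_conj, hcr]
      have hc4 : 4 ≤ cr := by
        have h4 : (2:ℝ)^2 ≤ ‖z‖^2 := by nlinarith [norm_nonneg z]
        rw [Complex.sq_norm] at h4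
        simpa [hcr] using (by linarith : (4:ℝ) ≤ Complex.normSq z)
      have hy2 : 0 < z.im^2 := by positivity
      have hbc : br^2 < 4*cr := by
        have : cr = z.re^2 + z.im^2 := by
          rw [hcr, Complex.normSq_apply]; ring
        rw [this, hbr]; nlinarith
      -- Pa z = -(n Qa z)
      have hPz : Pa z = -((n:ℂ) * Qa z) := by linear_combination h1
      have hPw : Pa w = -((n:ℂ) * Qa w) := by linear_combination h2
      -- K vanishes
      have e1 : Pa z * Qa w - Pa w * Qa z = 0 := by rw [hPz, hPw]; ring
      have e2 : (z - w) * Ka (z+w) (z*w) = 0 := by rw [← I1]; exact e1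
      have hzw : z - w ≠ 0 := by
        rw [hw, Complex.sub_conj]
        simp [him]
      have hKC : Ka ((br:ℂ)) ((cr:ℂ)) = 0 := by
        rw [← hsum, ← hprod]
        rcases mul_eq_zero.mp e2 with h | h
        · exact absurd h hzw
        · exact h
      have hKr : Ka br cr = 0 := by
        have : ((Ka br cr : ℝ) : ℂ) = 0 := by rw [Ka_cast]; exact hKC
        exact_mod_cast this
      -- S value
      have hQw : Qa w = (starRingEnd ℂ) (Qa z) := by rw [hw, Qa_conj]
      have hQQ : Qa z * Qa w = ((Complex.normSq (Qa z) : ℝ) : ℂ) := by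
        rw [hQw, Complex.mul_conj]
      have hS : ((Sa br cr : ℝ) : ℂ) = 2 * (1 - (n:ℂ)) * ((Complex.normSq (Qa z) : ℝ) : ℂ) := by
        rw [Sa_cast, ← hsum, ← hprod, ← I3, hPz, hPw, ← hQQ]
        ring
      have hSr : Sa br cr = 2 * (1 - (n:ℝ)) * Complex.normSq (Qa z) := by
        have : ((Sa br cr : ℝ) : ℂ) = (((2 * (1 - (n:ℝ)) * Complex.normSq (Qa z)) : ℝ) : ℂ) := by
          rw [hS]; push_cast; ring
        exact_mod_cast this
      have hSle : Sa br cr ≤ 0 := by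
        rw [hSr]
        have h1' : (1:ℝ) - (n:ℝ) ≤ 0 := by linarith
        have h2' : 0 ≤ Complex.normSq (Qa z) := Complex.normSq_nonneg _
        nlinarith
      -- case split on br
      rcases le_or_gt br (-4) with hb | hb
      · exact absurd (L1a' br cr hb hbc) (not_lt.mpr hSle)
      · rcases le_or_gt br 2 with hb2 | hb2
        · exact absurd (L1b' br cr hb.le hb2 hc4) (not_lt.mpr hSle)
        · exact absurd hKr (L2' br cr hb2.le hbc).ne
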